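/- arXiv:2108.02908 — 7 statements merged into one kernel-verified Lean document; each statement's English description precedes it below -/
import Mathlib

section
/- Let X be a real Banach space. Then X has the Ball Dentable Property (BDP) if and only if the bidual X** has the w*-Ball Dentable Property (w*-BDP), i.e. the closed unit ball of X** admits weak*-slices (slices determined by norm-one elements of X*) of arbitrarily small diameter. -/
open Metric Topology Pointwise ENNReal

noncomputable section

/-- The slice `S(B_X, f, α) = {x ∈ B_X : f x > 1 - α}` of the closed unit ball of `X`
determined by the functional `f` and `α`. -/
def ballSlice (X : Type*) [NormedAddCommGroup X] [NormedSpace ℝ X]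
    (f : X →L[ℝ] ℝ) (α : ℝ) : Set X :=
  {x | x ∈ closedBall (0 : X) 1 ∧ 1 - α < f x}

/-- `X` has the Ball Dentable Property: the closed unit ball has slices (determined by
norm-one functionals) of arbitrarily small diameter. -/
def BDP (X : Type*) [NormedAddCommGroup X] [NormedSpace ℝ X] : Prop :=
  ∀ ε > (0 : ℝ), ∃ f : X →L[ℝ] ℝ, ‖f‖ = 1 ∧ ∃ α > (0 : ℝ), diam (ballSlice X f α) < ε

/-- The weak topology on `X`: the coarsest topology making all continuous linear
functionals continuous. -/
def weakTop (X : Type*) [NormedAddCommGroup X] [NormedSpace ℝ X] : TopologicalSpace X :=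
  ⨅ f : X →L[ℝ] ℝ, TopologicalSpace.induced f inferInstance

/-- `X` has the Ball Huskable Property: the closed unit ball has nonempty relatively
weakly open subsets of arbitrarily small diameter. -/
def BHP (X : Type*) [NormedAddCommGroup X] [NormedSpace ℝ X] : Prop :=
  ∀ ε > (0 : ℝ), ∃ V : Set X, IsOpen[weakTop X] V ∧
    (V ∩ closedBall (0 : X) 1).Nonempty ∧ diam (V ∩ closedBall (0 : X) 1) < ε

/-- `X` has the Ball Small Combination of Slices Property: there are finite convex
combinations of slices of the closed unit ball of arbitrarily small diameter. -/
def BSCSP (X : Type*) [NormedAddCommGroup X] [NormedSpace ℝ X] : Prop :=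
  ∀ ε > (0 : ℝ), ∃ (n : ℕ) (f : Fin n → X →L[ℝ] ℝ) (α lam : Fin n → ℝ),
    (∀ i, ‖f i‖ = 1) ∧ (∀ i, 0 < α i) ∧ (∀ i, 0 ≤ lam i) ∧ (∑ i, lam i = 1) ∧
    diam (∑ i, lam i • ballSlice X (f i) (α i)) < ε

/-- The weak* ballSlice `{g ∈ B_{E*} : g e > 1 - α}` of the closed unit ball of the dual of `E`
determined by `e : E` and `α`. -/
def wstarSlice (E : Type*) [NormedAddCommGroup E] [NormedSpace ℝ E]
    (e : E) (α : ℝ) : Set (E →L[ℝ] ℝ) :=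
  {g | g ∈ closedBall (0 : E →L[ℝ] ℝ) 1 ∧ 1 - α < g e}

/-- The dual of `E` has the w*-Ball Dentable Property: the closed unit ball of `E*` has
weak* slices (determined by norm-one elements of `E`) of arbitrarily small diameter. -/
def wstarBDP (E : Type*) [NormedAddCommGroup E] [NormedSpace ℝ E] : Prop :=
  ∀ ε > (0 : ℝ), ∃ e : E, ‖e‖ = 1 ∧ ∃ α > (0 : ℝ), diam (wstarSlice E e α) < ε

/-- The weak* topology `σ(E*, E)` on the dual of `E`. -/
def wstarTop (E : Type*) [NormedAddCommGroup E] [NormedSpace ℝ E] :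
    TopologicalSpace (E →L[ℝ] ℝ) :=
  ⨅ e : E, TopologicalSpace.induced (fun g : E →L[ℝ] ℝ => g e) inferInstance

/-- The dual of `E` has the w*-Ball Huskable Property: the closed unit ball of `E*` has
nonempty relatively weak*-open subsets of arbitrarily small diameter. -/
def wstarBHP (E : Type*) [NormedAddCommGroup E] [NormedSpace ℝ E] : Prop :=
  ∀ ε > (0 : ℝ), ∃ V : Set (E →L[ℝ] ℝ), IsOpen[wstarTop E] V ∧
    (V ∩ closedBall (0 : E →L[ℝ] ℝ) 1).Nonempty ∧
    diam (V ∩ closedBall (0 : E →L[ℝ] ℝ) 1) < ε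

/-- The dual of `E` has the w*-Ball Small Combination of Slices Property: there are finite
convex combinations of weak* slices of the closed unit ball of `E*` of arbitrarily small
diameter. -/
def wstarBSCSP (E : Type*) [NormedAddCommGroup E] [NormedSpace ℝ E] : Prop :=
  ∀ ε > (0 : ℝ), ∃ (n : ℕ) (e : Fin n → E) (α lam : Fin n → ℝ),
    (∀ i, ‖e i‖ = 1) ∧ (∀ i, 0 < α i) ∧ (∀ i, 0 ≤ lam i) ∧ (∑ i, lam i = 1) ∧
    diam (∑ i, lam i • wstarSlice E (e i) (α i)) < ε

section AuxLemmas

open NormedSpace Set Bornology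

variable {Y : Type*} [NormedAddCommGroup Y] [NormedSpace ℝ Y]

/-- Every continuous linear functional on the weak-* dual is evaluation at a point. -/
lemma weakDual_exists_eval (φ : WeakDual ℝ Y →L[ℝ] ℝ) :
    ∃ y : Y, ∀ G : WeakDual ℝ Y, φ G = G y := by
  have hcont : φ ⁻¹' (Set.Ioo (-1 : ℝ) 1) ∈ 𝓝 (0 : WeakDual ℝ Y) := by
    have h0 : Set.Ioo (-1 : ℝ) 1 ∈ 𝓝 (φ 0) := by
      rw [map_zero]
      exact Ioo_mem_nhds (by norm_num) (by norm_num)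
    exact φ.continuous.continuousAt.preimage_mem_nhds h0
  obtain ⟨U, hU, hUsub⟩ := ((topDualPairing ℝ Y).hasBasis_weakBilin.mem_iff).1 hcont
  obtain ⟨s, r, hr, rfl⟩ := (SeminormFamily.basisSets_iff _).1 hU
  have hker : ⨅ i : s, LinearMap.ker ((topDualPairing ℝ Y).flip (i : Y)) ≤
      LinearMap.ker (φ : WeakDual ℝ Y →ₗ[ℝ] ℝ) := by
    intro G hG
    simp only [Submodule.mem_iInf, LinearMap.mem_ker] at hG ⊢
    by_contra hφG
    have key : ∀ t : ℝ, |t| * |φ G| < 1 := by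
      intro t
      have hmem : (t • G : WeakDual ℝ Y) ∈
          Seminorm.ball (s.sup ((topDualPairing ℝ Y).toSeminormFamily)) 0 r := by
        rw [Seminorm.mem_ball_zero]
        refine Seminorm.finset_sup_apply_lt hr fun i hi => ?_
        have hGi : (topDualPairing ℝ Y) G i = 0 := hG ⟨i, hi⟩
        simp [LinearMap.toSeminormFamily_apply, map_smul, hGi, hr]
      have := hUsub hmem
      change φ (t • G) ∈ Set.Ioo (-1 : ℝ) 1 at this
      have e : φ (t • G) = t * φ G := φ.map_smul t G
      rw [e] at this
      simp only [Set.mem_preimage, Set.mem_Ioo, map_smul, smul_eq_mul] at this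
      rw [← abs_mul]
      exact abs_lt.2 this
    have := key (2 / |φ G|)
    rw [abs_div, abs_abs, abs_two, div_mul_cancel₀] at this
    · norm_num at this
    · exact abs_ne_zero.2 hφG
  have hspan := mem_span_of_iInf_ker_le_ker
    (L := fun i : s => (topDualPairing ℝ Y).flip (i : Y))
    (K := (φ : WeakDual ℝ Y →ₗ[ℝ] ℝ)) hker
  obtain ⟨c, hc⟩ := (Submodule.mem_span_range_iff_exists_fun ℝ).1 hspan
  refine ⟨∑ i : s, c i • (i : Y), fun G => ?_⟩
  have := LinearMap.congr_fun hc G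
  simp only [LinearMap.coe_sum, Finset.sum_apply, LinearMap.smul_apply,
    LinearMap.flip_apply, topDualPairing_apply, smul_eq_mul, ContinuousLinearMap.coe_coe] at this
  have h2 : G (∑ i : s, c i • (i : Y)) = ∑ i : s, c i * G (i : Y) := by
    rw [map_sum]
    simp [smul_eq_mul]
  rw [h2]
  change (∑ i : s, ⇑(c i • (topDualPairing ℝ Y).flip ↑i)) (WeakDual.toStrongDual G) = φ G at this
  rw [Finset.sum_apply] at this
  simpa using this.symm

variable {X : Type*} [NormedAddCommGroup X] [NormedSpace ℝ X]

/-- The canonical embedding into the double dual, viewed as landing in the weak-* dual. -/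
def jW (x : X) : WeakDual ℝ (X →L[ℝ] ℝ) := inclusionInDoubleDual ℝ X x

lemma jW_apply (x : X) (f : X →L[ℝ] ℝ) : jW x f = f x := rfl

lemma convex_jW_image {s : Set X} (hs : Convex ℝ s) : Convex ℝ (jW '' s) := by
  have : Convex ℝ ((inclusionInDoubleDual ℝ X).toLinearMap '' s) :=
    hs.linear_image _
  exact this

/-- Goldstine's theorem: the closed unit ball of `X` is weak-* dense in
the closed unit ball of `X**`. -/
instance : LocallyConvexSpace ℝ (WeakDual ℝ (X →L[ℝ] ℝ)) :=
  by
  have := @WeakBilin.locallyConvexSpace ℝ ((X →L[ℝ] ℝ) →L[ℝ] ℝ) (X →L[ℝ] ℝ) _ _ _ _ _ _ _ _ (topDualPairing ℝ (X →L[ℝ] ℝ))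
  exact this

lemma goldstine (F : WeakDual ℝ (X →L[ℝ] ℝ))
    (hF : ‖WeakDual.toStrongDual F‖ ≤ 1) :
    F ∈ closure (jW '' closedBall (0 : X) 1) := by
  by_contra hFK
  obtain ⟨φ, u, hKu, huF⟩ := geometric_hahn_banach_closed_point
    (convex_jW_image (convex_closedBall (0 : X) 1)).closure isClosed_closure hFK
  obtain ⟨h, hh⟩ := weakDual_exists_eval φ
  have hu0 : 0 < u := by
    have h0 : (0 : WeakDual ℝ (X →L[ℝ] ℝ)) ∈ closure (jW '' closedBall (0 : X) 1) := by
      refine subset_closure ⟨0, mem_closedBall_self zero_le_one, ?_⟩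
      show inclusionInDoubleDual ℝ X 0 = _
      exact map_zero _
    have := hKu 0 h0
    rwa [map_zero] at this
  have hball : ∀ x : X, ‖x‖ ≤ 1 → h x < u := by
    intro x hx
    have := hKu (jW x) (subset_closure ⟨x, mem_closedBall_zero_iff.2 hx, rfl⟩)
    rwa [hh (jW x)] at this
  have hnorm : ‖h‖ ≤ u := by
    refine h.opNorm_le_bound hu0.le fun y => ?_
    rcases eq_or_ne y 0 with rfl | hy
    · simp
    · have hny : (0 : ℝ) < ‖y‖ := norm_pos_iff.2 hy
      have hz : ‖(‖y‖⁻¹ • y : X)‖ ≤ 1 := by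
        rw [norm_smul, norm_inv, norm_norm, inv_mul_cancel₀ hny.ne']
      have h1 : h (‖y‖⁻¹ • y) < u := hball _ hz
      have h2 : h (-(‖y‖⁻¹ • y)) < u := by
        refine hball _ ?_
        rwa [norm_neg]
      rw [map_neg] at h2
      have habs : |h (‖y‖⁻¹ • y)| ≤ u := abs_le.2 ⟨by linarith, h1.le⟩
      have : h (‖y‖⁻¹ • y) = ‖y‖⁻¹ * h y := by rw [map_smul, smul_eq_mul]
      rw [this, abs_mul, abs_inv, abs_norm] at habs
      calc ‖h y‖ = ‖y‖ * (‖y‖⁻¹ * |h y|) := by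
            rw [← mul_assoc, mul_inv_cancel₀ hny.ne', one_mul]; rfl
        _ ≤ ‖y‖ * u := by
            refine mul_le_mul_of_nonneg_left ?_ hny.le
            exact habs
        _ = u * ‖y‖ := mul_comm _ _
  have hFh : φ F ≤ u := by
    rw [hh F]
    have hle : ‖WeakDual.toStrongDual F h‖ ≤ ‖WeakDual.toStrongDual F‖ * ‖h‖ :=
      (WeakDual.toStrongDual F).le_opNorm h
    rw [WeakDual.toStrongDual_apply] at hle
    calc F h ≤ ‖F h‖ := le_abs_self _
      _ ≤ ‖WeakDual.toStrongDual F‖ * ‖h‖ := hle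
      _ ≤ 1 * u := mul_le_mul hF hnorm (norm_nonneg _) zero_le_one
      _ = u := one_mul u
  exact absurd huF (not_lt.2 hFh)

/-- Any point of the weak-* slice lies in the weak-* closure of the image of the
corresponding slice of the ball of `X`. -/
lemma wstarSlice_subset_closure (f : X →L[ℝ] ℝ) (α : ℝ)
    {F : (X →L[ℝ] ℝ) →L[ℝ] ℝ} (hF : F ∈ wstarSlice (X →L[ℝ] ℝ) f α) :
    StrongDual.toWeakDual F ∈ closure (jW '' ballSlice X f α) := by
  obtain ⟨hF1, hF2⟩ := hF
  have hU : IsOpen {G : WeakDual ℝ (X →L[ℝ] ℝ) | 1 - α < G f} :=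
    isOpen_lt continuous_const (WeakDual.eval_continuous f)
  have hmem : StrongDual.toWeakDual F ∈
      {G : WeakDual ℝ (X →L[ℝ] ℝ) | 1 - α < G f} ∩ closure (jW '' closedBall (0 : X) 1) := by
    refine ⟨hF2, goldstine (StrongDual.toWeakDual F) ?_⟩
    rw [mem_closedBall_zero_iff] at hF1
    exact hF1
  have hsub := hU.inter_closure hmem
  have heq : {G : WeakDual ℝ (X →L[ℝ] ℝ) | 1 - α < G f} ∩ (jW '' closedBall (0 : X) 1) =
      jW '' ballSlice X f α := by
    ext G
    constructor
    · rintro ⟨hG1, x, hx, rfl⟩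
      exact ⟨x, ⟨hx, hG1⟩, rfl⟩
    · rintro ⟨x, ⟨hx1, hx2⟩, rfl⟩
      exact ⟨hx2, x, hx1, rfl⟩
  rwa [heq] at hsub

lemma dist_le_diam_ballSlice (f : X →L[ℝ] ℝ) (α : ℝ)
    {F G : (X →L[ℝ] ℝ) →L[ℝ] ℝ}
    (hF : F ∈ wstarSlice (X →L[ℝ] ℝ) f α) (hG : G ∈ wstarSlice (X →L[ℝ] ℝ) f α) :
    dist F G ≤ diam (ballSlice X f α) := by
  set S := ballSlice X f α with hS
  have hSbd : IsBounded S :=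
    isBounded_closedBall.subset fun x hx => hx.1
  have key : ∀ h : X →L[ℝ] ℝ, |F h - G h| ≤ diam S * ‖h‖ := by
    intro h
    set T : Set ℝ := (fun x : X => h x) '' S with hT
    have hTbd : IsBounded T := by
      refine (isBounded_closedBall (x := (0:ℝ)) (r := ‖h‖)).subset ?_
      rintro t ⟨x, hx, rfl⟩
      rw [mem_closedBall_zero_iff]
      calc ‖h x‖ ≤ ‖h‖ * ‖x‖ := h.le_opNorm x
        _ ≤ ‖h‖ * 1 := by
            refine mul_le_mul_of_nonneg_left ?_ (norm_nonneg h)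
            exact mem_closedBall_zero_iff.1 hx.1
        _ = ‖h‖ := mul_one _
    have hclos : ∀ H : (X →L[ℝ] ℝ) →L[ℝ] ℝ, H ∈ wstarSlice (X →L[ℝ] ℝ) f α →
        H h ∈ closure T := by
      intro H hH
      have hHc := wstarSlice_subset_closure f α hH
      have hcont : Continuous fun G : WeakDual ℝ (X →L[ℝ] ℝ) => G h :=
        WeakDual.eval_continuous h
      have h2 := image_closure_subset_closure_image hcont
        (Set.mem_image_of_mem (fun G : WeakDual ℝ (X →L[ℝ] ℝ) => G h) hHc)
      have heq : (fun G : WeakDual ℝ (X →L[ℝ] ℝ) => G h) '' (jW '' S) = T := by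
        rw [Set.image_image]
        rfl
      rw [heq] at h2
      exact h2
    have hFT := hclos F hF
    have hGT := hclos G hG
    have hdiam : diam (closure T) ≤ diam S * ‖h‖ := by
      rw [Metric.diam_closure]
      refine diam_le_of_forall_dist_le (by positivity) ?_
      rintro t ⟨x, hx, rfl⟩ t' ⟨x', hx', rfl⟩
      calc dist (h x) (h x') = ‖h (x - x')‖ := by
            rw [dist_eq_norm, map_sub]
        _ ≤ ‖h‖ * ‖x - x'‖ := h.le_opNorm _
        _ ≤ ‖h‖ * diam S := by
            refine mul_le_mul_of_nonneg_left ?_ (norm_nonneg h)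
            rw [← dist_eq_norm]
            exact dist_le_diam_of_mem hSbd hx hx'
        _ = diam S * ‖h‖ := mul_comm _ _
    calc |F h - G h| = dist (F h) (G h) := (Real.dist_eq _ _).symm
      _ ≤ diam (closure T) := dist_le_diam_of_mem hTbd.closure hFT hGT
      _ ≤ diam S * ‖h‖ := hdiam
  have hnorm : ‖F - G‖ ≤ diam S :=
    ContinuousLinearMap.opNorm_le_bound _ diam_nonneg fun h => by simpa using key h
  calc dist F G = ‖F - G‖ := dist_eq_norm F G
    _ ≤ diam S := hnorm

end AuxLemmas

/-- A Banach space `X` has `BDP` iff its bidual `X**` has `w*-BDP`. -/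
theorem statement0 (X : Type*) [NormedAddCommGroup X] [NormedSpace ℝ X] [CompleteSpace X] :
    BDP X ↔ wstarBDP (X →L[ℝ] ℝ) := by
  constructor
  · intro hBDP ε hε
    obtain ⟨f, hf, α, hα, hdiam⟩ := hBDP ε hε
    refine ⟨f, hf, α, hα, lt_of_le_of_lt ?_ hdiam⟩
    exact Metric.diam_le_of_forall_dist_le Metric.diam_nonneg fun F hF G hG =>
      dist_le_diam_ballSlice f α hF hG
  · intro hw ε hε
    obtain ⟨f, hf, α, hα, hdiam⟩ := hw ε hε
    refine ⟨f, hf, α, hα, lt_of_le_of_lt ?_ hdiam⟩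
    have hbd : Bornology.IsBounded (wstarSlice (X →L[ℝ] ℝ) f α) :=
      Metric.isBounded_closedBall.subset fun g hg => hg.1
    refine Metric.diam_le_of_forall_dist_le Metric.diam_nonneg fun x hx y hy => ?_
    have hdx : dist x y = dist (NormedSpace.inclusionInDoubleDual ℝ X x)
        (NormedSpace.inclusionInDoubleDual ℝ X y) := by
      rw [dist_eq_norm, dist_eq_norm (NormedSpace.inclusionInDoubleDual ℝ X x), ← map_sub]
      exact ((NormedSpace.inclusionInDoubleDualLi ℝ (E := X)).norm_map (x - y)).symm
    rw [hdx]
    refine Metric.dist_le_diam_of_mem hbd ?_ ?_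
    · refine ⟨?_, hx.2⟩
      rw [mem_closedBall_zero_iff]
      have hnx : ‖NormedSpace.inclusionInDoubleDual ℝ X x‖ = ‖x‖ :=
        (NormedSpace.inclusionInDoubleDualLi ℝ (E := X)).norm_map x
      rw [hnx]
      exact mem_closedBall_zero_iff.1 hx.1
    · refine ⟨?_, hy.2⟩
      rw [mem_closedBall_zero_iff]
      have hny : ‖NormedSpace.inclusionInDoubleDual ℝ X y‖ = ‖y‖ :=
        (NormedSpace.inclusionInDoubleDualLi ℝ (E := X)).norm_map y
      rw [hny]
      exact mem_closedBall_zero_iff.1 hy.1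
end
end

section
/- Let X be a real Banach space. Then X has the Ball Huskable Property (BHP) if and only if the bidual X** has the w*-Ball Huskable Property (w*-BHP), i.e. for every ε > 0 the closed unit ball of X** has a nonempty relatively weak*-open subset of diameter less than ε. -/
open Metric Topology Pointwise ENNReal

noncomputable section

section auxiliary

open Set

/-- Basic sets are open in an infimum of topologies induced by real-valued maps. -/
lemma isOpen_iInf_induced_basic {α ι : Type*} (p : ι → α → ℝ) (I : Finset ι) (c : ι → ℝ) (δ : ℝ) :
    IsOpen[⨅ i, TopologicalSpace.induced (p i) inferInstance] {x | ∀ i ∈ I, |p i x - c i| < δ} := by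
  letI τ : TopologicalSpace α := ⨅ i, TopologicalSpace.induced (p i) inferInstance
  have heq : {x | ∀ i ∈ I, |p i x - c i| < δ} = ⋂ i ∈ I, (p i) ⁻¹' (ball (c i) δ) := by
    ext x; simp [Real.dist_eq]
  rw [heq]
  refine isOpen_biInter_finset fun i _ => ?_
  have h1 : IsOpen[TopologicalSpace.induced (p i) inferInstance] ((p i) ⁻¹' (ball (c i) δ)) :=
    isOpen_induced isOpen_ball
  exact h1.mono (iInf_le _ i)

/-- Neighborhoods in an infimum of topologies induced by real-valued maps contain
basic sets. -/
lemma nhds_iInf_induced_basic {α ι : Type*} (p : ι → α → ℝ) {V : Set α} {a : α}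
    (h : V ∈ @nhds α (⨅ i, TopologicalSpace.induced (p i) inferInstance) a) :
    ∃ (I : Finset ι) (δ : ℝ), 0 < δ ∧ {x | ∀ i ∈ I, |p i x - p i a| < δ} ⊆ V := by
  classical
  rw [nhds_iInf] at h
  simp_rw [nhds_induced] at h
  obtain ⟨I, hIfin, W, hW, hVeq⟩ := Filter.mem_iInf.mp h
  haveI : Fintype I := hIfin.fintype
  have key : ∀ i : I, ∃ δ > 0, {x | |p i x - p i a| < δ} ⊆ W i := by
    intro i
    obtain ⟨U, hU, hUW⟩ := Filter.mem_comap.mp (hW i)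
    obtain ⟨δ, hδ, hball⟩ := Metric.mem_nhds_iff.mp hU
    refine ⟨δ, hδ, fun x hx => hUW ?_⟩
    exact mem_preimage.mpr (hball (by simpa [Real.dist_eq] using hx))
  choose δ hδpos hδ using key
  rcases isEmpty_or_nonempty I with hI | hI
  · refine ⟨∅, 1, one_pos, fun x _ => ?_⟩
    rw [hVeq]
    exact Set.mem_iInter.mpr fun i => (hI.false i).elim
  · set δ₀ := Finset.univ.inf' Finset.univ_nonempty δ with hδ₀
    have hδ₀pos : 0 < δ₀ := by
      rw [hδ₀, Finset.lt_inf'_iff]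
      exact fun i _ => hδpos i
    refine ⟨hIfin.toFinset, δ₀, hδ₀pos, fun x hx => ?_⟩
    rw [hVeq]
    refine Set.mem_iInter.mpr fun i => ?_
    have hi : (i : ι) ∈ hIfin.toFinset := hIfin.mem_toFinset.mpr i.2
    have := hx _ hi
    exact hδ i (lt_of_lt_of_le this (Finset.inf'_le δ (Finset.mem_univ i)))

variable {X : Type*} [NormedAddCommGroup X] [NormedSpace ℝ X]

lemma helly {F : (X →L[ℝ] ℝ) →L[ℝ] ℝ} (hF : ‖F‖ ≤ 1)
    {ι : Type*} [Fintype ι] (f : ι → X →L[ℝ] ℝ) {δ : ℝ} (hδ : 0 < δ) :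
    ∃ x : X, ‖x‖ ≤ 1 ∧ ∀ i, |f i x - F (f i)| < δ := by
  classical
  set M : ℝ := 1 + ∑ i, ‖f i‖ with hM
  have hMpos : 0 < M := by positivity
  have hMge : ∀ i, ‖f i‖ ≤ M := by
    intro i
    have : ‖f i‖ ≤ ∑ j, ‖f j‖ :=
      Finset.single_le_sum (fun j _ => norm_nonneg (f j)) (Finset.mem_univ i)
    linarith
  set δ' : ℝ := δ / (2 * M) with hδ'def
  have hδ'pos : 0 < δ' := by positivity
  set r : ℝ := 1 + δ' with hrdef
  have hr1 : 1 < r := by linarith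
  have hrpos : 0 < r := by linarith
  set T : X →L[ℝ] (ι → ℝ) := ContinuousLinearMap.pi f with hT
  set c : ι → ℝ := fun i => F (f i) with hc
  have hcbd : ∀ i, |c i| ≤ ‖f i‖ := by
    intro i
    calc |c i| = ‖F (f i)‖ := (Real.norm_eq_abs _).symm
    _ ≤ ‖F‖ * ‖f i‖ := F.le_opNorm _
    _ ≤ 1 * ‖f i‖ := by gcongr
    _ = ‖f i‖ := one_mul _
  -- key claim: c is in the closure of T '' ball 0 r
  have hmem : c ∈ closure (T '' ball (0 : X) r) := by
    by_contra hcon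
    obtain ⟨ℓ, u, hu₁, hu₂⟩ := geometric_hahn_banach_closed_point
      (((convex_ball (0:X) r).linear_image (T : X →ₗ[ℝ] (ι → ℝ))).closure) isClosed_closure hcon
    -- identify ℓ with a sum
    have hkey : ∀ y : ι → ℝ, ℓ y = ∑ i, ℓ (Pi.single i 1) * y i := by
      intro y
      have hy : (∑ i, y i • (Pi.single i 1 : ι → ℝ)) = y := by
        ext j
        simp [Pi.single_apply, Finset.sum_ite_eq, mul_comm]
      conv_lhs => rw [← hy]
      rw [map_sum]
      refine Finset.sum_congr rfl fun i _ => ?_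
      rw [map_smul]
      simp [mul_comm]
    set g : X →L[ℝ] ℝ := ∑ i, ℓ (Pi.single i 1) • f i with hg
    have hgx : ∀ x : X, g x = ℓ (T x) := by
      intro x
      rw [hkey (T x)]
      simp [hg, ContinuousLinearMap.sum_apply, hT]
    have hFg : F g = ℓ c := by
      rw [hkey c]
      simp [hg, map_sum, map_smul, hc, smul_eq_mul]
    have hupos : 0 < u := by
      have h0 : (0 : ι → ℝ) ∈ closure (T '' ball (0:X) r) := by
        apply subset_closure
        exact ⟨0, by simpa using hrpos, by simp⟩
      have := hu₁ 0 h0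
      simpa using this
    -- bound |g x| for ‖x‖ ≤ r
    have hball : ∀ x : X, ‖x‖ ≤ r → g x < u := by
      intro x hx
      rw [hgx]
      apply hu₁
      have hx' : x ∈ closure (ball (0:X) r) := by
        rw [closure_ball _ (ne_of_gt hrpos)]
        simpa using hx
      exact image_closure_subset_closure_image T.continuous ⟨x, hx', rfl⟩
    have habs : ∀ x : X, ‖x‖ ≤ r → |g x| < u := by
      intro x hx
      rw [abs_lt]
      constructor
      · have := hball (-x) (by simpa using hx)
        simp only [map_neg] at this
        linarith
      · exact hball x hx
    have hgnorm : ‖g‖ ≤ u / r := by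
      apply ContinuousLinearMap.opNorm_le_bound _ (by positivity)
      intro x
      rcases eq_or_ne x 0 with hx | hx
      · simp [hx]
      · have hxn : 0 < ‖x‖ := norm_pos_iff.mpr hx
        have h1 : ‖(r / ‖x‖) • x‖ ≤ r := by
          rw [norm_smul, Real.norm_eq_abs, abs_of_pos (by positivity)]
          rw [div_mul_cancel₀ _ (ne_of_gt hxn)]
        have h2 := habs _ h1
        rw [map_smul, smul_eq_mul, abs_mul, abs_of_pos (by positivity)] at h2
        rw [Real.norm_eq_abs, div_mul_eq_mul_div, le_div_iff₀ hrpos]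
        calc ‖g x‖ * r = |g x| * r := rfl
        _ ≤ u * ‖x‖ := by
            rw [div_mul_eq_mul_div, div_lt_iff₀ hxn] at h2
            nlinarith
    -- contradiction
    have h3 : F g ≤ ‖g‖ := by
      calc F g ≤ |F g| := le_abs_self _
      _ = ‖F g‖ := (Real.norm_eq_abs _).symm
      _ ≤ ‖F‖ * ‖g‖ := F.le_opNorm g
      _ ≤ 1 * ‖g‖ := by gcongr
      _ = ‖g‖ := one_mul _
    have h4 : u / r < u := div_lt_self hupos hr1
    rw [hFg] at h3
    linarith [hu₂, hgnorm]
  -- extract approximation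
  obtain ⟨b, hbS, hbd⟩ := Metric.mem_closure_iff.mp hmem (δ / 2) (by positivity)
  obtain ⟨x, hx, rfl⟩ := hbS
  rw [mem_ball, dist_zero_right] at hx
  have hcoord : ∀ i, |f i x - c i| < δ / 2 := by
    intro i
    have := dist_le_pi_dist c (T x) i
    have h := lt_of_le_of_lt this hbd
    rw [Real.dist_eq] at h
    simpa [hT, abs_sub_comm] using h
  refine ⟨r⁻¹ • x, ?_, ?_⟩
  · rw [norm_smul, Real.norm_eq_abs, abs_of_pos (by positivity)]
    rw [inv_mul_le_iff₀ hrpos, mul_one]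
    linarith
  · intro i
    have hrinv0 : (0:ℝ) < r⁻¹ := by positivity
    have hrinv : r⁻¹ ≤ 1 := inv_le_one_of_one_le₀ hr1.le
    have heval : f i (r⁻¹ • x) = r⁻¹ * f i x := by rw [map_smul, smul_eq_mul]
    have hsplit : f i (r⁻¹ • x) - c i = r⁻¹ * (f i x - c i) + (r⁻¹ - 1) * c i := by
      rw [heval]; ring
    have hb1 : |r⁻¹ * (f i x - c i)| < δ / 2 := by
      rw [abs_mul, abs_of_pos (by positivity : (0:ℝ) < r⁻¹)]
      calc r⁻¹ * |f i x - c i| ≤ 1 * |f i x - c i| := by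
            gcongr
      _ < δ / 2 := by rw [one_mul]; exact hcoord i
    have hb2 : |(r⁻¹ - 1) * c i| ≤ δ / 2 := by
      rw [abs_mul]
      have e1 : |r⁻¹ - 1| = δ' / r := by
        rw [abs_of_nonpos (by rw [sub_nonpos]; exact hrinv)]
        rw [hrdef]
        field_simp
        ring
      rw [e1]
      have : δ' / r ≤ δ' := div_le_self hδ'pos.le hr1.le
      calc δ' / r * |c i| ≤ δ' * M :=
            mul_le_mul this ((hcbd i).trans (hMge i)) (abs_nonneg _) hδ'pos.le
      _ = δ / 2 := by rw [hδ'def]; field_simp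
    calc |f i (r⁻¹ • x) - c i| ≤ |r⁻¹ * (f i x - c i)| + |(r⁻¹ - 1) * c i| := by
          rw [hsplit]; exact abs_add_le _ _
    _ < δ / 2 + δ / 2 := by
        rcases lt_or_eq_of_le hb2 with h | h
        · linarith
        · linarith
    _ = δ := by ring
end auxiliary
section mainproof

open Set NormedSpace

variable {X : Type*} [NormedAddCommGroup X] [NormedSpace ℝ X]

lemma Jnorm (x : X) : ‖inclusionInDoubleDual ℝ X x‖ = ‖x‖ :=
  (inclusionInDoubleDualLi ℝ (E := X)).norm_map x

lemma bhp_of_wstarbhp (h : wstarBHP (X →L[ℝ] ℝ)) : BHP X := by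
  classical
  intro ε hε
  obtain ⟨W, hWopen, ⟨G₀, hG₀W, hG₀B⟩, hWd⟩ := h ε hε
  set J := inclusionInDoubleDual ℝ X with hJ
  have hJcont : Continuous[weakTop X, wstarTop (X →L[ℝ] ℝ)] ⇑J := by
    refine continuous_iInf_rng.mpr fun e => continuous_induced_rng.mpr ?_
    exact continuous_iff_le_induced.mpr (iInf_le _ e)
  refine ⟨⇑J ⁻¹' W, @IsOpen.preimage X _ (weakTop X) (wstarTop _) ⇑J hJcont W hWopen, ?_, ?_⟩
  · -- nonempty: use Goldstine/Helly at G₀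
    have hG₀n : ‖G₀‖ ≤ 1 := by rwa [Metric.mem_closedBall, dist_zero_right] at hG₀B
    have hWmem : W ∈ @nhds _ (wstarTop (X →L[ℝ] ℝ)) G₀ :=
      @IsOpen.mem_nhds _ (wstarTop _) G₀ W hWopen hG₀W
    obtain ⟨I, δ, hδpos, hIδ⟩ :=
      nhds_iInf_induced_basic (fun (e : X →L[ℝ] ℝ) (g : (X →L[ℝ] ℝ) →L[ℝ] ℝ) => g e) hWmem
    obtain ⟨x, hx1, hx2⟩ := helly hG₀n (fun j : I => (j : X →L[ℝ] ℝ)) hδpos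
    refine ⟨x, ?_, by rwa [Metric.mem_closedBall, dist_zero_right]⟩
    refine mem_preimage.mpr (hIδ ?_)
    intro e he
    exact hx2 ⟨e, he⟩
  · -- diameter
    have hd : diam (W ∩ Metric.closedBall 0 1) < ε := hWd
    have hbdd : Bornology.IsBounded (W ∩ Metric.closedBall (0 : (X →L[ℝ] ℝ) →L[ℝ] ℝ) 1) :=
      (Metric.isBounded_closedBall).subset inter_subset_right
    refine lt_of_le_of_lt ?_ hd
    refine Metric.diam_le_of_forall_dist_le Metric.diam_nonneg ?_
    rintro x ⟨hxW, hxB⟩ y ⟨hyW, hyB⟩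
    have hJd : dist x y = dist (J x) (J y) := by
      rw [dist_eq_norm, ← Jnorm, map_sub]; exact (dist_eq_norm (J x) (J y)).symm
    rw [hJd]
    refine Metric.dist_le_diam_of_mem hbdd ⟨hxW, ?_⟩ ⟨hyW, ?_⟩ <;>
      rw [Metric.mem_closedBall, dist_zero_right, Jnorm] <;>
      rwa [Metric.mem_closedBall, dist_zero_right] at hxB hyB



lemma wstarbhp_of_bhp (h : BHP X) : wstarBHP (X →L[ℝ] ℝ) := by
  classical
  intro ε hε
  obtain ⟨V, hVopen, ⟨x₀, hx₀V, hx₀B⟩, hVd⟩ := h ε hε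
  set J := inclusionInDoubleDual ℝ X with hJ
  set d := diam (V ∩ Metric.closedBall (0 : X) 1) with hdd
  have hd0 : 0 ≤ d := Metric.diam_nonneg
  have hVbd : Bornology.IsBounded (V ∩ Metric.closedBall (0 : X) 1) :=
    (Metric.isBounded_closedBall).subset inter_subset_right
  have hx₀n : ‖x₀‖ ≤ 1 := by rwa [Metric.mem_closedBall, dist_zero_right] at hx₀B
  -- extract a basic weak neighborhood of x₀ inside V
  have hVmem : V ∈ @nhds _ (weakTop X) x₀ :=
    @IsOpen.mem_nhds _ (weakTop X) x₀ V hVopen hx₀V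
  obtain ⟨I, δ, hδpos, hIδ⟩ :=
    nhds_iInf_induced_basic (fun (f : X →L[ℝ] ℝ) (x : X) => f x) hVmem
  -- the weak* open set
  set W : Set ((X →L[ℝ] ℝ) →L[ℝ] ℝ) := {F | ∀ f ∈ I, |F f - f x₀| < δ / 2} with hW
  have hWopen : IsOpen[wstarTop (X →L[ℝ] ℝ)] W := by
    have := isOpen_iInf_induced_basic
      (fun (e : X →L[ℝ] ℝ) (g : (X →L[ℝ] ℝ) →L[ℝ] ℝ) => g e) I (fun f => f x₀) (δ / 2)
    exact this
  refine ⟨W, hWopen, ⟨J x₀, ?_, ?_⟩, ?_⟩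
  · intro f _
    have : (J x₀) f = f x₀ := rfl
    rw [this]
    simpa using half_pos hδpos
  · rw [Metric.mem_closedBall, dist_zero_right, Jnorm]
    exact hx₀n
  · -- diameter estimate
    refine lt_of_le_of_lt ?_ hVd
    refine Metric.diam_le_of_forall_dist_le hd0 ?_
    rintro F ⟨hFW, hFB⟩ G ⟨hGW, hGB⟩
    have hFn : ‖F‖ ≤ 1 := by rwa [Metric.mem_closedBall, dist_zero_right] at hFB
    have hGn : ‖G‖ ≤ 1 := by rwa [Metric.mem_closedBall, dist_zero_right] at hGB
    rw [dist_eq_norm]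
    refine ContinuousLinearMap.opNorm_le_bound _ hd0 fun f => ?_
    -- show |F f - G f| ≤ d * ‖f‖
    refine le_of_forall_pos_le_add fun η hη => ?_
    set δ'' := min (δ / 2) (η / 2) with hδ''
    have hδ''pos : 0 < δ'' := lt_min (half_pos hδpos) (half_pos hη)
    -- approximate F and G on I ∪ {f}
    obtain ⟨x, hx1, hx2⟩ := helly hFn (fun j : (insert f I : Finset (X →L[ℝ] ℝ)) =>
      (j : X →L[ℝ] ℝ)) hδ''pos
    obtain ⟨y, hy1, hy2⟩ := helly hGn (fun j : (insert f I : Finset (X →L[ℝ] ℝ)) =>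
      (j : X →L[ℝ] ℝ)) hδ''pos
    have hxV : x ∈ V ∩ Metric.closedBall (0 : X) 1 := by
      refine ⟨hIδ ?_, by rwa [Metric.mem_closedBall, dist_zero_right]⟩
      intro f' hf'
      have h1 := hx2 ⟨f', Finset.mem_insert_of_mem hf'⟩
      have h2 := hFW f' hf'
      have := abs_sub_abs_le_abs_sub (f' x - F f') (f' x - f' x₀)
      calc |f' x - f' x₀| ≤ |f' x - F f'| + |F f' - f' x₀| := by
            have := abs_add_le (f' x - F f') (F f' - f' x₀)
            simpa using this
      _ < δ'' + δ / 2 := add_lt_add h1 h2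
      _ ≤ δ / 2 + δ / 2 := by
          have := min_le_left (δ / 2) (η / 2); linarith
      _ = δ := by ring
    have hyV : y ∈ V ∩ Metric.closedBall (0 : X) 1 := by
      refine ⟨hIδ ?_, by rwa [Metric.mem_closedBall, dist_zero_right]⟩
      intro f' hf'
      have h1 := hy2 ⟨f', Finset.mem_insert_of_mem hf'⟩
      have h2 := hGW f' hf'
      calc |f' y - f' x₀| ≤ |f' y - G f'| + |G f' - f' x₀| := by
            have := abs_add_le (f' y - G f') (G f' - f' x₀)
            simpa using this
      _ < δ'' + δ / 2 := add_lt_add h1 h2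
      _ ≤ δ / 2 + δ / 2 := by
          have := min_le_left (δ / 2) (η / 2); linarith
      _ = δ := by ring
    have hxy : ‖x - y‖ ≤ d := by
      have := Metric.dist_le_diam_of_mem hVbd hxV hyV
      rwa [dist_eq_norm] at this
    have hFf := hx2 ⟨f, Finset.mem_insert_self f I⟩
    have hGf := hy2 ⟨f, Finset.mem_insert_self f I⟩
    have hδ''η : δ'' ≤ η / 2 := min_le_right _ _
    have hfd : |f x - f y| ≤ d * ‖f‖ := by
      have h1 : f x - f y = f (x - y) := by rw [map_sub]
      rw [h1]
      calc |f (x - y)| = ‖f (x - y)‖ := (Real.norm_eq_abs _).symm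
      _ ≤ ‖f‖ * ‖x - y‖ := f.le_opNorm _
      _ ≤ ‖f‖ * d := by gcongr
      _ = d * ‖f‖ := mul_comm _ _
    have key : |F f - G f| ≤ d * ‖f‖ + η := by
      have split : F f - G f = -(f x - F f) + (f x - f y) + (f y - G f) := by ring
      calc |F f - G f| ≤ |f x - F f| + |f x - f y| + |f y - G f| := by
            rw [split]
            refine (abs_add_le _ _).trans ?_
            have h3 := abs_add_le (-(f x - F f)) (f x - f y)
            have h4 := abs_neg (f x - F f)
            linarith
      _ ≤ δ'' + (d * ‖f‖) + δ'' := by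
          refine add_le_add (add_le_add hFf.le hfd) ?_
          have : |f y - G f| < δ'' := hy2 ⟨f, Finset.mem_insert_self f I⟩
          exact this.le
      _ ≤ d * ‖f‖ + η := by linarith
    calc ‖(F - G) f‖ = |F f - G f| := by
          rw [Real.norm_eq_abs, ContinuousLinearMap.sub_apply]
    _ ≤ d * ‖f‖ + η := key

end mainproof

/-- A Banach space `X` has `BHP` iff its bidual `X**` has `w*-BHP`. -/
theorem statement1 (X : Type*) [NormedAddCommGroup X] [NormedSpace ℝ X] [CompleteSpace X] :
    BHP X ↔ wstarBHP (X →L[ℝ] ℝ) :=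
  ⟨fun h => wstarbhp_of_bhp h, fun h => bhp_of_wstarbhp h⟩
end
end

section
/- Let X be a real Banach space. Then X has the Ball Small Combination of Slices Property (BSCSP) if and only if the bidual X** has the w*-Ball Small Combination of Slices Property (w*-BSCSP), i.e. for every ε > 0 there is a finite convex combination of weak*-slices of the closed unit ball of X** (slices determined by norm-one elements of X*) whose diameter is less than ε. -/
open Metric Topology Pointwise ENNReal

noncomputable section

section Aux

variable {Y : Type*} [NormedAddCommGroup Y] [NormedSpace ℝ Y]

/-- A convex combination of subsets of the closed unit ball lies in the closed unit ball. -/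
lemma combo_subset_ball {n : ℕ} (S : Fin n → Set Y) (lam : Fin n → ℝ)
    (hS : ∀ i, S i ⊆ closedBall (0 : Y) 1) (h0 : ∀ i, 0 ≤ lam i) (h1 : ∑ i, lam i = 1) :
    (∑ i, lam i • S i) ⊆ closedBall (0 : Y) 1 := by
  intro x hx
  rw [Set.mem_finset_sum] at hx
  obtain ⟨g, hg, hgx⟩ := hx
  rw [mem_closedBall_zero_iff, ← hgx]
  calc ‖∑ i, g i‖ ≤ ∑ i, ‖g i‖ := norm_sum_le _ _
    _ ≤ ∑ i, lam i := by
        refine Finset.sum_le_sum fun i _ => ?_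
        obtain ⟨w, hw, hwg⟩ := hg (Finset.mem_univ i)
        rw [← hwg, norm_smul, Real.norm_eq_abs, abs_of_nonneg (h0 i)]
        have : ‖w‖ ≤ 1 := mem_closedBall_zero_iff.mp (hS i hw)
        calc lam i * ‖w‖ ≤ lam i * 1 := by
              exact mul_le_mul_of_nonneg_left this (h0 i)
          _ = lam i := mul_one _
    _ = 1 := h1

/-- If a real functional is at most `C` on the unit ball, its norm is at most `C`. -/
lemma opNorm_le_of_unit (h : Y →L[ℝ] ℝ) {C : ℝ} (hC : ∀ g : Y, ‖g‖ ≤ 1 → h g ≤ C) :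
    ‖h‖ ≤ C := by
  have hC0 : 0 ≤ C := by simpa using hC 0 (by simp)
  refine h.opNorm_le_bound hC0 fun x => ?_
  rcases eq_or_ne x 0 with rfl | hx
  · simp
  · have hxn : 0 < ‖x‖ := norm_pos_iff.mpr hx
    set y := ‖x‖⁻¹ • x with hy
    have hyn : ‖y‖ ≤ 1 := by
      rw [hy, norm_smul, norm_inv, norm_norm, inv_mul_cancel₀ hxn.ne']
    have h1 : h y ≤ C := hC y hyn
    have h2 : h (-y) ≤ C := hC (-y) (by simpa using hyn)
    have h3 : |h y| ≤ C := abs_le.mpr ⟨by simpa using neg_le_of_neg_le (by simpa using h2), h1⟩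
    have : h x = ‖x‖ * h y := by
      rw [hy, map_smul, smul_eq_mul, ← mul_assoc, mul_inv_cancel₀ hxn.ne', one_mul]
    rw [Real.norm_eq_abs, this, abs_mul, abs_of_nonneg hxn.le, mul_comm]
    exact mul_le_mul_of_nonneg_right h3 hxn.le

variable {X : Type*} [NormedAddCommGroup X] [NormedSpace ℝ X]

/-- Finite-dimensional Goldstine / Helly lemma: any element `Φ` of the bidual unit ball can be
approximated by an element of the unit ball of `X` simultaneously on finitely many
functionals. -/
lemma goldstine_fin {m : ℕ} (F : Fin m → X →L[ℝ] ℝ) (Φ : (X →L[ℝ] ℝ) →L[ℝ] ℝ)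
    (hΦ : ‖Φ‖ ≤ 1) {δ : ℝ} (hδ : 0 < δ) :
    ∃ x : X, ‖x‖ ≤ 1 ∧ ∀ j, |F j x - Φ (F j)| < δ := by
  set T : X →L[ℝ] (Fin m → ℝ) := ContinuousLinearMap.pi F with hT
  set B : Set X := closedBall (0 : X) 1 with hB
  set c : Fin m → ℝ := fun j => Φ (F j) with hc
  have hmem : c ∈ closure (T '' B) := by
    by_contra hcn
    have hconv : Convex ℝ (closure (T '' B)) :=
      ((convex_closedBall (0 : X) 1).linear_image (T : X →ₗ[ℝ] (Fin m → ℝ))).closure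
    obtain ⟨f, u, hfs, hfc⟩ :=
      geometric_hahn_banach_closed_point hconv isClosed_closure hcn
    -- the composed functional
    set g : X →L[ℝ] ℝ := f.comp T with hg
    have hgu : ∀ x : X, ‖x‖ ≤ 1 → g x < u := fun x hx =>
      hfs (T x) (subset_closure ⟨x, mem_closedBall_zero_iff.mpr hx, rfl⟩)
    have hgnorm : ‖g‖ ≤ u := opNorm_le_of_unit g fun x hx => (hgu x hx).le
    -- key identity : Φ g = f c
    have hgsum : g = ∑ j, f (Pi.single j 1) • F j := by
      ext x
      have := (f : (Fin m → ℝ) →ₗ[ℝ] ℝ).pi_apply_eq_sum_univ (T x)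
      simp only [ContinuousLinearMap.coe_coe] at this
      simp only [hg, ContinuousLinearMap.comp_apply, this, ContinuousLinearMap.coe_sum',
        Finset.sum_apply, ContinuousLinearMap.coe_smul', Pi.smul_apply, smul_eq_mul]
      refine Finset.sum_congr rfl fun j _ => ?_
      have hsingle : (fun k => if j = k then (1:ℝ) else 0) = Pi.single j 1 := by
        funext k; simp [Pi.single_apply, eq_comm]
      simp [hT, mul_comm, hsingle]
    have hkey : Φ g = f c := by
      rw [hgsum, map_sum]
      have := (f : (Fin m → ℝ) →ₗ[ℝ] ℝ).pi_apply_eq_sum_univ c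
      simp only [ContinuousLinearMap.coe_coe] at this
      rw [this]
      refine Finset.sum_congr rfl fun j _ => ?_
      have hsingle : (fun k => if j = k then (1:ℝ) else 0) = Pi.single j 1 := by
        funext k; simp [Pi.single_apply, eq_comm]
      simp [hc, mul_comm, hsingle]
    have hΦg : Φ g ≤ u := by
      calc Φ g ≤ |Φ g| := le_abs_self _
        _ ≤ ‖Φ‖ * ‖g‖ := Φ.le_opNorm g
        _ ≤ 1 * u := by
            have hu0 : (0 : ℝ) ≤ u := le_trans (norm_nonneg g) hgnorm
            exact mul_le_mul hΦ hgnorm (norm_nonneg g) zero_le_one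
        _ = u := one_mul u
    rw [hkey] at hΦg
    exact absurd hfc (not_lt.mpr hΦg)
  rw [Metric.mem_closure_iff] at hmem
  obtain ⟨y, hy, hyd⟩ := hmem δ hδ
  obtain ⟨x, hxB, rfl⟩ := hy
  refine ⟨x, mem_closedBall_zero_iff.mp hxB, fun j => ?_⟩
  have := dist_le_pi_dist c (T x) j
  calc |F j x - Φ (F j)| = dist (c j) (T x j) := by
        rw [Real.dist_eq, abs_sub_comm]
        simp [hT, hc]
    _ ≤ dist c (T x) := dist_le_pi_dist c (T x) j
    _ < δ := hyd

end Aux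

set_option maxHeartbeats 2000000 in
/-- A Banach space `X` has `BSCSP` iff its bidual `X**` has `w*-BSCSP`. -/
theorem statement2 (X : Type*) [NormedAddCommGroup X] [NormedSpace ℝ X] [CompleteSpace X] :
    BSCSP X ↔ wstarBSCSP (X →L[ℝ] ℝ) := by
  set J := NormedSpace.inclusionInDoubleDualLi ℝ (E := X) with hJdef
  have hJapp : ∀ (x : X) (f : X →L[ℝ] ℝ), J x f = f x := fun x f => rfl
  constructor
  · -- BSCSP X → wstarBSCSP X**
    intro h ε hε
    obtain ⟨n, f, α, lam, hf, hα, hlam0, hlam1, hdiam⟩ := h (ε / 2) (by linarith)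
    refine ⟨n, f, fun i => α i / 2, lam, hf, fun i => half_pos (hα i), hlam0, hlam1, ?_⟩
    set D := diam (∑ i, lam i • ballSlice X (f i) (α i)) with hD
    have hD0 : 0 ≤ D := diam_nonneg
    have hDε : D < ε / 2 := hdiam
    have hsub : (∑ i, lam i • ballSlice X (f i) (α i)) ⊆ closedBall (0 : X) 1 :=
      combo_subset_ball _ _ (fun i x hx => hx.1) hlam0 hlam1
    have hbdd : Bornology.IsBounded (∑ i, lam i • ballSlice X (f i) (α i)) :=
      (isBounded_closedBall).subset hsub
    have key : ∀ Ψ ∈ ∑ i, lam i • wstarSlice (X →L[ℝ] ℝ) (f i) (α i / 2),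
        ∀ Θ ∈ ∑ i, lam i • wstarSlice (X →L[ℝ] ℝ) (f i) (α i / 2),
        dist Ψ Θ ≤ D + ε / 4 := by
      intro Ψ hΨ Θ hΘ
      rw [Set.mem_finset_sum] at hΨ hΘ
      obtain ⟨zΨ, hzΨ, hzΨsum⟩ := hΨ
      obtain ⟨zΘ, hzΘ, hzΘsum⟩ := hΘ
      have hPex : ∀ i, ∃ w, w ∈ wstarSlice (X →L[ℝ] ℝ) (f i) (α i / 2) ∧ lam i • w = zΨ i :=
        fun i => Set.mem_smul_set.mp (hzΨ (Finset.mem_univ i))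
      have hQex : ∀ i, ∃ w, w ∈ wstarSlice (X →L[ℝ] ℝ) (f i) (α i / 2) ∧ lam i • w = zΘ i :=
        fun i => Set.mem_smul_set.mp (hzΘ (Finset.mem_univ i))
      choose P hPmem hPz using hPex
      choose Q hQmem hQz using hQex
      rw [dist_eq_norm]
      refine opNorm_le_of_unit _ fun g hg => ?_
      -- pick good approximants in the ball of X
      have hxex : ∀ i, ∃ x : X, ‖x‖ ≤ 1 ∧
          |f i x - P i (f i)| < min (ε / 8) (α i / 2) ∧ |g x - P i g| < min (ε / 8) (α i / 2) := by
        intro i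
        have hδ : 0 < min (ε / 8) (α i / 2) := lt_min (by linarith) (half_pos (hα i))
        obtain ⟨x, hx1, hx2⟩ := goldstine_fin ![f i, g] (P i)
          (mem_closedBall_zero_iff.mp (hPmem i).1) hδ
        exact ⟨x, hx1, by simpa using hx2 0, by simpa using hx2 1⟩
      have hyex : ∀ i, ∃ y : X, ‖y‖ ≤ 1 ∧
          |f i y - Q i (f i)| < min (ε / 8) (α i / 2) ∧ |g y - Q i g| < min (ε / 8) (α i / 2) := by
        intro i
        have hδ : 0 < min (ε / 8) (α i / 2) := lt_min (by linarith) (half_pos (hα i))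
        obtain ⟨y, hy1, hy2⟩ := goldstine_fin ![f i, g] (Q i)
          (mem_closedBall_zero_iff.mp (hQmem i).1) hδ
        exact ⟨y, hy1, by simpa using hy2 0, by simpa using hy2 1⟩
      choose xP hxP1 hxP2 hxP3 using hxex
      choose yQ hyQ1 hyQ2 hyQ3 using hyex
      -- the approximants land in the slices of X
      have hxPs : ∀ i, xP i ∈ ballSlice X (f i) (α i) := by
        intro i
        refine ⟨mem_closedBall_zero_iff.mpr (hxP1 i), ?_⟩
        have h1 := abs_lt.mp (hxP2 i)
        have h2 := (hPmem i).2
        have h3 : min (ε / 8) (α i / 2) ≤ α i / 2 := min_le_right _ _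
        linarith [h1.1, h1.2]
      have hyQs : ∀ i, yQ i ∈ ballSlice X (f i) (α i) := by
        intro i
        refine ⟨mem_closedBall_zero_iff.mpr (hyQ1 i), ?_⟩
        have h1 := abs_lt.mp (hyQ2 i)
        have h2 := (hQmem i).2
        have h3 : min (ε / 8) (α i / 2) ≤ α i / 2 := min_le_right _ _
        linarith [h1.1, h1.2]
      set xb : X := ∑ i, lam i • xP i with hxb
      set yb : X := ∑ i, lam i • yQ i with hyb
      have hxbmem : xb ∈ ∑ i, lam i • ballSlice X (f i) (α i) := by
        rw [Set.mem_finset_sum]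
        exact ⟨fun i => lam i • xP i,
          fun {i} _ => Set.smul_mem_smul_set (hxPs i), rfl⟩
      have hybmem : yb ∈ ∑ i, lam i • ballSlice X (f i) (α i) := by
        rw [Set.mem_finset_sum]
        exact ⟨fun i => lam i • yQ i,
          fun {i} _ => Set.smul_mem_smul_set (hyQs i), rfl⟩
      have hgxb : g xb = ∑ i, lam i * g (xP i) := by
        rw [hxb, map_sum]; simp [smul_eq_mul]
      have hgyb : g yb = ∑ i, lam i * g (yQ i) := by
        rw [hyb, map_sum]; simp [smul_eq_mul]
      have hΨg : Ψ g = ∑ i, lam i * P i g := by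
        rw [← hzΨsum]
        simp only [ContinuousLinearMap.coe_sum', Finset.sum_apply]
        refine Finset.sum_congr rfl fun i _ => ?_
        rw [← hPz i]; simp [smul_eq_mul]
      have hΘg : Θ g = ∑ i, lam i * Q i g := by
        rw [← hzΘsum]
        simp only [ContinuousLinearMap.coe_sum', Finset.sum_apply]
        refine Finset.sum_congr rfl fun i _ => ?_
        rw [← hQz i]; simp [smul_eq_mul]
      have hsum1 : ∑ i, lam i * P i g ≤ g xb + ε / 8 := by
        have : ∑ i, lam i * P i g ≤ ∑ i, (lam i * g (xP i) + lam i * (ε / 8)) := by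
          refine Finset.sum_le_sum fun i _ => ?_
          have h1 := (abs_lt.mp (hxP3 i)).1
          have h3 : min (ε / 8) (α i / 2) ≤ ε / 8 := min_le_left _ _
          have h4 : P i g ≤ g (xP i) + ε / 8 := by linarith
          calc lam i * P i g ≤ lam i * (g (xP i) + ε / 8) :=
                mul_le_mul_of_nonneg_left h4 (hlam0 i)
            _ = lam i * g (xP i) + lam i * (ε / 8) := by ring
        calc ∑ i, lam i * P i g ≤ ∑ i, (lam i * g (xP i) + lam i * (ε / 8)) := this
          _ = (∑ i, lam i * g (xP i)) + (∑ i, lam i) * (ε / 8) := by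
              rw [Finset.sum_add_distrib, Finset.sum_mul]
          _ = g xb + ε / 8 := by rw [hgxb, hlam1, one_mul]
      have hsum2 : g yb - ε / 8 ≤ ∑ i, lam i * Q i g := by
        have : ∑ i, (lam i * g (yQ i) - lam i * (ε / 8)) ≤ ∑ i, lam i * Q i g := by
          refine Finset.sum_le_sum fun i _ => ?_
          have h1 := (abs_lt.mp (hyQ3 i)).2
          have h3 : min (ε / 8) (α i / 2) ≤ ε / 8 := min_le_left _ _
          have h4 : g (yQ i) - ε / 8 ≤ Q i g := by linarith
          calc lam i * g (yQ i) - lam i * (ε / 8) = lam i * (g (yQ i) - ε / 8) := by ring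
            _ ≤ lam i * Q i g := mul_le_mul_of_nonneg_left h4 (hlam0 i)
        calc g yb - ε / 8 = (∑ i, lam i * g (yQ i)) - (∑ i, lam i) * (ε / 8) := by
              rw [hgyb, hlam1, one_mul]
          _ = ∑ i, (lam i * g (yQ i) - lam i * (ε / 8)) := by
              rw [Finset.sum_sub_distrib, Finset.sum_mul]
          _ ≤ ∑ i, lam i * Q i g := this
      have hgd : g xb - g yb ≤ D := by
        have h1 : g (xb - yb) ≤ ‖xb - yb‖ := by
          calc g (xb - yb) ≤ |g (xb - yb)| := le_abs_self _
            _ ≤ ‖g‖ * ‖xb - yb‖ := g.le_opNorm _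
            _ ≤ 1 * ‖xb - yb‖ := mul_le_mul_of_nonneg_right hg (norm_nonneg _)
            _ = ‖xb - yb‖ := one_mul _
        have h2 : ‖xb - yb‖ ≤ D := by
          rw [← dist_eq_norm]
          exact dist_le_diam_of_mem hbdd hxbmem hybmem
        rw [map_sub] at h1
        linarith
      calc (Ψ - Θ) g = Ψ g - Θ g := rfl
        _ = (∑ i, lam i * P i g) - (∑ i, lam i * Q i g) := by rw [hΨg, hΘg]
        _ ≤ (g xb + ε / 8) - (g yb - ε / 8) := by linarith
        _ ≤ D + ε / 4 := by linarith
    calc diam (∑ i, lam i • wstarSlice (X →L[ℝ] ℝ) (f i) (α i / 2))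
        ≤ D + ε / 4 := diam_le_of_forall_dist_le (by linarith) key
      _ < ε := by linarith
  · -- wstarBSCSP X** → BSCSP X
    intro h ε hε
    obtain ⟨n, e, α, lam, he, hα, hlam0, hlam1, hdiam⟩ := h ε hε
    refine ⟨n, e, α, lam, he, hα, hlam0, hlam1, ?_⟩
    have hsubw : (∑ i, lam i • wstarSlice (X →L[ℝ] ℝ) (e i) (α i)) ⊆
        closedBall (0 : (X →L[ℝ] ℝ) →L[ℝ] ℝ) 1 :=
      combo_subset_ball _ _ (fun i x hx => hx.1) hlam0 hlam1
    have hbddw : Bornology.IsBounded (∑ i, lam i • wstarSlice (X →L[ℝ] ℝ) (e i) (α i)) :=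
      (isBounded_closedBall).subset hsubw
    have him : (J : X → (X →L[ℝ] ℝ) →L[ℝ] ℝ) '' (∑ i, lam i • ballSlice X (e i) (α i)) ⊆
        ∑ i, lam i • wstarSlice (X →L[ℝ] ℝ) (e i) (α i) := by
      rintro _ ⟨x, hx, rfl⟩
      rw [Set.mem_finset_sum] at hx ⊢
      obtain ⟨z, hz, hzsum⟩ := hx
      have hwex : ∀ i, ∃ w, w ∈ ballSlice X (e i) (α i) ∧ lam i • w = z i :=
        fun i => Set.mem_smul_set.mp (hz (Finset.mem_univ i))
      choose w hwmem hwz using hwex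
      refine ⟨fun i => lam i • J (w i), fun {i} _ => Set.smul_mem_smul_set ?_, ?_⟩
      · refine ⟨mem_closedBall_zero_iff.mpr ?_, ?_⟩
        · rw [J.norm_map]
          exact mem_closedBall_zero_iff.mp (hwmem i).1
        · rw [hJapp]
          exact (hwmem i).2
      · rw [← hzsum, show J (∑ i, z i) = ∑ i, J (z i) from map_sum J.toLinearMap _ _]
        refine Finset.sum_congr rfl fun i _ => ?_
        rw [← hwz i, J.map_smul]
    calc diam (∑ i, lam i • ballSlice X (e i) (α i))
        = diam ((J : X → (X →L[ℝ] ℝ) →L[ℝ] ℝ) ''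
            (∑ i, lam i • ballSlice X (e i) (α i))) := (J.isometry.diam_image _).symm
      _ ≤ diam (∑ i, lam i • wstarSlice (X →L[ℝ] ℝ) (e i) (α i)) := diam_mono him hbddw
      _ < ε := hdiam
end
end

section
/- Let X and Y be real Banach spaces, 1 ≤ p < ∞, and Z = X ⊕_p Y (the product X × Y with norm ‖(x,y)‖ = (‖x‖^p + ‖y‖^p)^{1/p}). For every slice S(B_X, x*, α) of B_X (where x* in X* has norm one and α > 0) and every ε > 0, there exist a norm-one functional z* in Z* and μ > 0 such that the slice S(B_Z, z*, μ) of B_Z is contained in the set S(B_X, x*, α) × εB_Y, i.e. every (x,y) in S(B_Z, z*, μ) satisfies x ∈ S(B_X, x*, α) and ‖y‖ ≤ ε. -/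
open Metric Topology Pointwise ENNReal

noncomputable section

section Aux

variable {X Y : Type*} [NormedAddCommGroup X] [NormedSpace ℝ X]
  [NormedAddCommGroup Y] [NormedSpace ℝ Y] {p : ℝ≥0∞} [Fact (1 ≤ p)]

lemma aux_one_le_toReal (hp : p ≠ ∞) : (1:ℝ) ≤ p.toReal := by
  have h := Fact.out (p := 1 ≤ p)
  simpa using ENNReal.toReal_mono hp h

lemma aux_norm_rpow (hp : p ≠ ∞) (z : WithLp p (X × Y)) :
    ‖z‖ ^ p.toReal = ‖z.fst‖ ^ p.toReal + ‖z.snd‖ ^ p.toReal := by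
  have hq : (0:ℝ) < p.toReal := lt_of_lt_of_le one_pos (aux_one_le_toReal hp)
  have hs : (0:ℝ) ≤ ‖z.fst‖ ^ p.toReal + ‖z.snd‖ ^ p.toReal :=
    add_nonneg (Real.rpow_nonneg (norm_nonneg _) _) (Real.rpow_nonneg (norm_nonneg _) _)
  rw [WithLp.prod_norm_eq_add hq, ← Real.rpow_mul hs, one_div,
    inv_mul_cancel₀ hq.ne', Real.rpow_one]

lemma aux_norm_fst_le (hp : p ≠ ∞) (z : WithLp p (X × Y)) : ‖z.fst‖ ≤ ‖z‖ := by
  have hq : (0:ℝ) < p.toReal := lt_of_lt_of_le one_pos (aux_one_le_toReal hp)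
  have h1 : ‖z.fst‖ ^ p.toReal ≤ ‖z‖ ^ p.toReal := by
    rw [aux_norm_rpow hp]
    exact le_add_of_nonneg_right (Real.rpow_nonneg (norm_nonneg _) _)
  by_contra h
  push_neg at h
  exact absurd (Real.rpow_lt_rpow (norm_nonneg _) h hq) (not_lt.mpr h1)

lemma aux_norm_inl (hp : p ≠ ∞) (x : X) :
    ‖(WithLp.equiv p (X × Y)).symm (x, 0)‖ = ‖x‖ := by
  have hq : (0:ℝ) < p.toReal := lt_of_lt_of_le one_pos (aux_one_le_toReal hp)
  have : ((WithLp.equiv p (X × Y)).symm (x, 0)).fst = x := rfl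
  have h2 : ((WithLp.equiv p (X × Y)).symm (x, 0)).snd = (0:Y) := rfl
  rw [WithLp.prod_norm_eq_add hq, this, h2, norm_zero, Real.zero_rpow hq.ne',
    add_zero, ← Real.rpow_mul (norm_nonneg _), mul_one_div, div_self hq.ne',
    Real.rpow_one]

end Aux

/-- For `Z = X ⊕_p Y` (`1 ≤ p < ∞`), any slice of `B_X` and any `ε > 0`, there is a slice
of `B_Z` contained in `S(B_X, x*, α) × ε B_Y`. -/
theorem statement3 (X Y : Type*) [NormedAddCommGroup X] [NormedSpace ℝ X] [CompleteSpace X]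
    [NormedAddCommGroup Y] [NormedSpace ℝ Y] [CompleteSpace Y]
    (p : ℝ≥0∞) [Fact (1 ≤ p)] (hp : p ≠ ∞)
    (f : X →L[ℝ] ℝ) (hf : ‖f‖ = 1) (α : ℝ) (hα : 0 < α) (ε : ℝ) (hε : 0 < ε) :
    ∃ g : WithLp p (X × Y) →L[ℝ] ℝ, ‖g‖ = 1 ∧ ∃ μ > (0 : ℝ),
      ballSlice (WithLp p (X × Y)) g μ ⊆
        {z : WithLp p (X × Y) | (WithLp.equiv p (X × Y) z).1 ∈ ballSlice X f α ∧
          ‖(WithLp.equiv p (X × Y) z).2‖ ≤ ε} := by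
  classical
  set q := p.toReal with hqdef
  have hq1 : (1:ℝ) ≤ q := aux_one_le_toReal hp
  have hq0 : (0:ℝ) < q := lt_of_lt_of_le one_pos hq1
  set t : ℝ := min 1 ε with ht
  have ht0 : 0 < t := lt_min one_pos hε
  set μ : ℝ := min (min α (1/2)) (t ^ q / q) with hμdef
  have hμ0 : 0 < μ := lt_min (lt_min hα (by norm_num))
    (div_pos (Real.rpow_pos_of_pos ht0 _) hq0)
  have hμα : μ ≤ α := le_trans (min_le_left _ _) (min_le_left _ _)
  have hμhalf : μ ≤ 1/2 := le_trans (min_le_left _ _) (min_le_right _ _)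
  -- the functional
  set g : WithLp p (X × Y) →L[ℝ] ℝ :=
    f.comp ((ContinuousLinearMap.fst ℝ X Y).comp
      (WithLp.prodContinuousLinearEquiv p ℝ X Y).toContinuousLinearMap) with hg
  have hgz : ∀ z : WithLp p (X × Y), g z = f z.fst := fun z => rfl
  have hgle : ‖g‖ ≤ 1 := by
    refine ContinuousLinearMap.opNorm_le_bound _ zero_le_one fun z => ?_
    rw [hgz, one_mul]
    calc |f z.fst| ≤ ‖f‖ * ‖z.fst‖ := f.le_opNorm _
    _ = ‖z.fst‖ := by rw [hf, one_mul]
    _ ≤ ‖z‖ := aux_norm_fst_le hp z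
  have hgge : (1:ℝ) ≤ ‖g‖ := by
    rw [← hf]
    refine ContinuousLinearMap.opNorm_le_bound _ (norm_nonneg g) fun x => ?_
    have := g.le_opNorm ((WithLp.equiv p (X × Y)).symm (x, 0))
    rw [aux_norm_inl hp] at this
    simpa [hgz] using this
  refine ⟨g, le_antisymm hgle hgge, μ, hμ0, fun z hz => ?_⟩
  obtain ⟨hz1, hz2⟩ := hz
  rw [mem_closedBall, dist_zero_right] at hz1
  rw [hgz] at hz2
  have hxball : ‖z.fst‖ ≤ 1 := le_trans (aux_norm_fst_le hp z) hz1
  have hfx : 1 - α < f z.fst := lt_of_le_of_lt (by linarith) hz2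
  refine ⟨⟨by simpa [mem_closedBall, dist_zero_right] using hxball, hfx⟩, ?_⟩
  -- bound on the second coordinate
  have hxlb : 1 - μ ≤ ‖z.fst‖ := by
    have : f z.fst ≤ ‖z.fst‖ := by
      calc f z.fst ≤ |f z.fst| := le_abs_self _
      _ ≤ ‖f‖ * ‖z.fst‖ := f.le_opNorm _
      _ = ‖z.fst‖ := by rw [hf, one_mul]
    linarith
  have h1μ : (0:ℝ) ≤ 1 - μ := by linarith
  have hber : 1 - q * μ ≤ (1 - μ) ^ q := by
    have := one_add_mul_self_le_rpow_one_add (s := -μ) (by linarith) hq1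
    simpa [sub_eq_add_neg, mul_comm] using this
  have hyq : ‖z.snd‖ ^ q ≤ ε ^ q := by
    have hsum := aux_norm_rpow hp z
    have hzq : ‖z‖ ^ q ≤ 1 := Real.rpow_le_one (norm_nonneg _) hz1 hq0.le
    have hxq : (1 - μ) ^ q ≤ ‖z.fst‖ ^ q :=
      Real.rpow_le_rpow h1μ hxlb hq0.le
    have hμt : q * μ ≤ t ^ q := by
      have : μ ≤ t ^ q / q := le_trans (min_le_right _ _) le_rfl
      calc q * μ ≤ q * (t ^ q / q) := by nlinarith
      _ = t ^ q := by field_simp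
    have htε : t ^ q ≤ ε ^ q :=
      Real.rpow_le_rpow ht0.le (min_le_right _ _) hq0.le
    calc ‖z.snd‖ ^ q = ‖z‖ ^ q - ‖z.fst‖ ^ q := by linarith [hsum]
    _ ≤ 1 - (1 - μ) ^ q := by linarith
    _ ≤ q * μ := by linarith
    _ ≤ ε ^ q := le_trans hμt htε
  by_contra hcon
  push_neg at hcon
  exact absurd (Real.rpow_lt_rpow hε.le hcon hq0) (not_lt.mpr hyq)
end
end

section
/- Let (X_i)_{i ∈ I} be a family of real Banach spaces, 1 ≤ p < ∞, and let X = (⊕_{i∈I} X_i)_{ℓ_p} be their ℓ_p-sum, i.e. the space of all families (x_i) with x_i ∈ X_i and Σ_i ‖x_i‖^p < ∞, normed by ‖(x_i)‖ = (Σ_i ‖x_i‖^p)^{1/p}. If X_{i_0} has the Ball Dentable Property (BDP) for some index i_0 ∈ I, then X has BDP. -/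
open Metric Topology Pointwise ENNReal

noncomputable section

set_option maxHeartbeats 1000000 in
/-- If some summand `X i₀` of the `ℓ_p`-sum `(⊕ᵢ Xᵢ)_{ℓ_p}` (`1 ≤ p < ∞`) has `BDP`,
then the sum has `BDP`. -/
theorem statement5 (I : Type*) (X : I → Type*) [∀ i, NormedAddCommGroup (X i)]
    [∀ i, NormedSpace ℝ (X i)] [∀ i, CompleteSpace (X i)]
    (p : ℝ≥0∞) [Fact (1 ≤ p)] (hp : p ≠ ∞) (i₀ : I) (h : BDP (X i₀)) :
    BDP (lp X p) := by
  classical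
  intro ε hε
  have hp1 : (1 : ℝ≥0∞) ≤ p := Fact.out
  have hp0 : p ≠ 0 := by
    intro h0; rw [h0] at hp1; exact (not_le.2 zero_lt_one) hp1
  have hpr : 0 < p.toReal := ENNReal.toReal_pos hp0 hp
  obtain ⟨f₀, hf₀, α₀, hα₀, hdiam⟩ := h (ε/2) (by linarith)
  -- the functional g x = f₀ (x i₀)
  set L : lp X p →ₗ[ℝ] ℝ :=
    { toFun := fun x => f₀ (x i₀)
      map_add' := fun x y => by
        simp only [lp.coeFn_add, Pi.add_apply, map_add]
      map_smul' := fun c x => by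
        simp only [lp.coeFn_smul, Pi.smul_apply, map_smul, RingHom.id_apply] }
  have hbound : ∀ x : lp X p, ‖L x‖ ≤ 1 * ‖x‖ := by
    intro x
    calc ‖f₀ (x i₀)‖ ≤ ‖f₀‖ * ‖x i₀‖ := f₀.le_opNorm _
      _ = ‖x i₀‖ := by rw [hf₀, one_mul]
      _ ≤ ‖x‖ := lp.norm_apply_le_norm hp0 x i₀
      _ = 1 * ‖x‖ := (one_mul _).symm
  set g : lp X p →L[ℝ] ℝ := L.mkContinuous 1 hbound with hgdef
  have hgapp : ∀ x : lp X p, g x = f₀ (x i₀) := fun x => rfl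
  have hsingle_norm : ∀ z : X i₀, ‖lp.single p i₀ z‖ = ‖z‖ := by
    intro z
    have := lp.norm_single (E := X) (p := p) (lt_of_lt_of_le zero_lt_one hp1) i₀ z
    simpa using this
  have hgnorm : ‖g‖ = 1 := by
    refine le_antisymm (L.mkContinuous_norm_le zero_le_one hbound) ?_
    have h1 : ‖f₀‖ ≤ ‖g‖ := by
      refine f₀.opNorm_le_bound (norm_nonneg g) fun z => ?_
      have : g (lp.single p i₀ z) = f₀ z := by
        rw [hgapp]; simp [lp.single_apply_self]
      calc ‖f₀ z‖ = ‖g (lp.single p i₀ z)‖ := by rw [this]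
        _ ≤ ‖g‖ * ‖lp.single p i₀ z‖ := g.le_opNorm _
        _ = ‖g‖ * ‖z‖ := by rw [hsingle_norm]
    rwa [hf₀] at h1
  -- choose α
  have hη : (0 : ℝ) < (ε/8) ^ p.toReal := Real.rpow_pos_of_pos (by linarith) _
  have hc : ContinuousAt (fun t : ℝ => (1 - t) ^ p.toReal) 0 := by
    have h1 : ContinuousAt (fun t : ℝ => 1 - t) 0 :=
      (continuous_const.sub continuous_id).continuousAt
    have h2 : ContinuousAt (fun s : ℝ => s ^ p.toReal) ((fun t : ℝ => 1 - t) 0) := by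
      simpa using Real.continuousAt_rpow_const 1 p.toReal (Or.inl one_ne_zero)
    exact h2.comp h1
  obtain ⟨δ, hδ, hδ'⟩ := Metric.continuousAt_iff.mp hc ((ε/8) ^ p.toReal) hη
  set α : ℝ := min α₀ (min (1/2) (δ/2)) with hαdef
  have hα : 0 < α := lt_min hα₀ (lt_min (by norm_num) (by linarith))
  have hαα₀ : α ≤ α₀ := min_le_left _ _
  have hαhalf : α ≤ 1/2 := le_trans (min_le_right _ _) (min_le_left _ _)
  have hαδ : α < δ := lt_of_le_of_lt (le_trans (min_le_right _ _) (min_le_right _ _)) (by linarith)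
  have hrpow : 1 - (ε/8) ^ p.toReal < (1 - α) ^ p.toReal := by
    have := hδ' (x := α) (by rwa [Real.dist_eq, sub_zero, abs_of_pos hα])
    rw [Real.dist_eq, sub_zero, Real.one_rpow] at this
    have := abs_lt.mp this
    linarith [this.1]
  -- the tail bound
  have htail : ∀ x : lp X p, ‖x‖ ≤ 1 → 1 - α < f₀ (x i₀) →
      ‖x - lp.single p i₀ (x i₀)‖ < ε/8 := by
    intro x hx1 hx2
    have hxi : 1 - α < ‖x i₀‖ := by
      calc 1 - α < f₀ (x i₀) := hx2
        _ ≤ ‖f₀ (x i₀)‖ := le_abs_self _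
        _ ≤ ‖f₀‖ * ‖x i₀‖ := f₀.le_opNorm _
        _ = ‖x i₀‖ := by rw [hf₀, one_mul]
    have key : ‖x - lp.single p i₀ (x i₀)‖ ^ p.toReal = ‖x‖ ^ p.toReal - ‖x i₀‖ ^ p.toReal := by
      have := lp.norm_compl_sum_single (E := X) hpr x {i₀}
      simpa using this
    have h1 : ‖x‖ ^ p.toReal ≤ 1 :=
      Real.rpow_le_one (norm_nonneg _) hx1 hpr.le
    have h2 : (1 - α) ^ p.toReal ≤ ‖x i₀‖ ^ p.toReal :=
      Real.rpow_le_rpow (by linarith) hxi.le hpr.le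
    have hlt : ‖x - lp.single p i₀ (x i₀)‖ ^ p.toReal < (ε/8) ^ p.toReal := by
      rw [key]; linarith
    by_contra hcon
    push_neg at hcon
    exact absurd hlt (not_lt.2 (Real.rpow_le_rpow (by linarith) hcon hpr.le))
  refine ⟨g, hgnorm, α, hα, ?_⟩
  -- diameter estimate
  have hbdd : Bornology.IsBounded (ballSlice (X i₀) f₀ α₀) :=
    (isBounded_closedBall (x := (0 : X i₀)) (r := 1)).subset fun z hz => hz.1
  have hDnn : 0 ≤ diam (ballSlice (X i₀) f₀ α₀) := diam_nonneg
  have hle : diam (ballSlice (lp X p) g α) ≤ diam (ballSlice (X i₀) f₀ α₀) + ε/4 := by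
    refine diam_le_of_forall_dist_le (by linarith) ?_
    intro x hx y hy
    have hx1 : ‖x‖ ≤ 1 := mem_closedBall_zero_iff.mp hx.1
    have hy1 : ‖y‖ ≤ 1 := mem_closedBall_zero_iff.mp hy.1
    have hx2 : 1 - α < f₀ (x i₀) := by rw [← hgapp]; exact hx.2
    have hy2 : 1 - α < f₀ (y i₀) := by rw [← hgapp]; exact hy.2
    have hxi : x i₀ ∈ ballSlice (X i₀) f₀ α₀ :=
      ⟨mem_closedBall_zero_iff.mpr ((lp.norm_apply_le_norm hp0 x i₀).trans hx1),
        by linarith⟩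
    have hyi : y i₀ ∈ ballSlice (X i₀) f₀ α₀ :=
      ⟨mem_closedBall_zero_iff.mpr ((lp.norm_apply_le_norm hp0 y i₀).trans hy1),
        by linarith⟩
    have hd : dist (x i₀) (y i₀) ≤ diam (ballSlice (X i₀) f₀ α₀) :=
      dist_le_diam_of_mem hbdd hxi hyi
    have hsub : lp.single p i₀ (x i₀) - lp.single p i₀ (y i₀)
        = lp.single p i₀ (x i₀ - y i₀) := by
      apply lp.ext
      funext j
      rw [lp.coeFn_sub]
      by_cases hj : j = i₀
      · subst hj
        simp [lp.single_apply_self]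
      · simp [lp.single_apply_ne p i₀ _ hj]
    calc dist x y = ‖x - y‖ := dist_eq_norm _ _
      _ = ‖(x - lp.single p i₀ (x i₀)) + (lp.single p i₀ (x i₀) - lp.single p i₀ (y i₀))
            + (lp.single p i₀ (y i₀) - y)‖ := by congr 1; abel
      _ ≤ ‖(x - lp.single p i₀ (x i₀)) + (lp.single p i₀ (x i₀) - lp.single p i₀ (y i₀))‖
            + ‖lp.single p i₀ (y i₀) - y‖ := norm_add_le _ _
      _ ≤ ‖x - lp.single p i₀ (x i₀)‖ + ‖lp.single p i₀ (x i₀) - lp.single p i₀ (y i₀)‖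
            + ‖lp.single p i₀ (y i₀) - y‖ := by
          gcongr; exact norm_add_le _ _
      _ ≤ ε/8 + dist (x i₀) (y i₀) + ε/8 := by
          have t1 := htail x hx1 hx2
          have t2 := htail y hy1 hy2
          have : ‖lp.single p i₀ (x i₀) - lp.single p i₀ (y i₀)‖ = dist (x i₀) (y i₀) := by
            rw [hsub, hsingle_norm, dist_eq_norm]
          rw [this, norm_sub_rev] at *
          linarith
      _ ≤ diam (ballSlice (X i₀) f₀ α₀) + ε/4 := by linarith
  calc diam (ballSlice (lp X p) g α) ≤ diam (ballSlice (X i₀) f₀ α₀) + ε/4 := hle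
    _ < ε/2 + ε/4 := by linarith
    _ < ε := by linarith
end
end

section
/- Let X and Y be real Banach spaces and Z = X ⊕_∞ Y (the product X × Y with norm ‖(x,y)‖ = max(‖x‖, ‖y‖)). Then Z has the Ball Huskable Property (BHP) if and only if both X and Y have BHP. -/
open Metric Topology Pointwise ENNReal

noncomputable section

/-- Type synonym carrying the weak topology. -/
def Weak (W : Type*) : Type _ := W

/-- Identity map into the weak synonym. -/
def Weak.mk {W : Type*} : W → Weak W := id

/-- Identity map out of the weak synonym. -/
def Weak.out {W : Type*} : Weak W → W := id

instance {W : Type*} [NormedAddCommGroup W] [NormedSpace ℝ W] :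
    TopologicalSpace (Weak W) := weakTop W

/-- Every continuous linear functional is continuous for the weak topology. -/
lemma weakTop_cont {W : Type*} [NormedAddCommGroup W] [NormedSpace ℝ W] (f : W →L[ℝ] ℝ) :
    Continuous (fun w : Weak W => f w.out) :=
  continuous_iff_le_induced.mpr (iInf_le _ f)

/-- A map into `W` is continuous for the weak topology on the target iff every functional
composes to a continuous map. -/
lemma weakTop_cont_rng {A : Type*} [TopologicalSpace A] {W : Type*} [NormedAddCommGroup W]
    [NormedSpace ℝ W] (g : A → Weak W)
    (h : ∀ f : W →L[ℝ] ℝ, Continuous (fun a => f (g a).out)) : Continuous g :=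
  continuous_iInf_rng.mpr fun f => continuous_induced_rng.mpr (h f)

section Aux

variable {X Y : Type*} [NormedAddCommGroup X] [NormedSpace ℝ X]
  [NormedAddCommGroup Y] [NormedSpace ℝ Y]

/-- The first coordinate inclusion as a continuous linear map into `X ⊕_∞ Y`. -/
def inlL : X →L[ℝ] WithLp ∞ (X × Y) :=
  ((WithLp.prodContinuousLinearEquiv ∞ ℝ X Y).symm).toContinuousLinearMap.comp
    (ContinuousLinearMap.inl ℝ X Y)

/-- The second coordinate inclusion as a continuous linear map into `X ⊕_∞ Y`. -/
def inrL : Y →L[ℝ] WithLp ∞ (X × Y) :=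
  ((WithLp.prodContinuousLinearEquiv ∞ ℝ X Y).symm).toContinuousLinearMap.comp
    (ContinuousLinearMap.inr ℝ X Y)

/-- The first coordinate projection as a continuous linear map on `X ⊕_∞ Y`. -/
def fstL : WithLp ∞ (X × Y) →L[ℝ] X :=
  (ContinuousLinearMap.fst ℝ X Y).comp
    (WithLp.prodContinuousLinearEquiv ∞ ℝ X Y).toContinuousLinearMap

/-- The second coordinate projection as a continuous linear map on `X ⊕_∞ Y`. -/
def sndL : WithLp ∞ (X × Y) →L[ℝ] Y :=
  (ContinuousLinearMap.snd ℝ X Y).comp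
    (WithLp.prodContinuousLinearEquiv ∞ ℝ X Y).toContinuousLinearMap

omit [NormedSpace ℝ X] [NormedSpace ℝ Y] in
lemma mem_ball_prod (z : WithLp ∞ (X × Y)) :
    z ∈ closedBall (0 : WithLp ∞ (X × Y)) 1 ↔
      z.fst ∈ closedBall (0 : X) 1 ∧ z.snd ∈ closedBall (0 : Y) 1 := by
  simp only [mem_closedBall_zero_iff, WithLp.prod_norm_eq_sup, sup_le_iff]

/-- Forward direction, first factor. -/
lemma bhp_of_prod_left (h : BHP (WithLp ∞ (X × Y))) : BHP X := by
  intro ε hε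
  obtain ⟨V, hVopen, ⟨z0, hz0V, hz0B⟩, hdiam⟩ := h ε hε
  set ι : X → WithLp ∞ (X × Y) := fun x => (WithLp.equiv ∞ (X × Y)).symm (x, z0.snd) with hι
  have hsum : ∀ a : X, ι a = inlL a + inrL z0.snd := by
    intro a
    show ι a = (WithLp.prodContinuousLinearEquiv ∞ ℝ X Y).symm (a, 0)
        + (WithLp.prodContinuousLinearEquiv ∞ ℝ X Y).symm (0, z0.snd)
    rw [← map_add]
    simp [hι, Prod.mk_add_mk]
  have hιc : Continuous (fun x : Weak X => Weak.mk (ι x.out)) := by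
    apply weakTop_cont_rng
    intro f
    have heq : (fun a : Weak X => f ((Weak.mk (ι a.out)).out)) =
        fun a : Weak X => (f.comp inlL) a.out + f (inrL z0.snd) := by
      funext a
      show f (ι a.out) = _
      rw [hsum a.out, map_add]
      rfl
    rw [heq]
    exact (weakTop_cont (f.comp inlL)).add continuous_const
  have hιmem : ∀ x : X, x ∈ closedBall (0 : X) 1 →
      ι x ∈ closedBall (0 : WithLp ∞ (X × Y)) 1 := by
    intro x hx
    rw [mem_ball_prod]
    refine ⟨?_, ?_⟩
    · simpa [hι] using hx
    · simpa [hι] using ((mem_ball_prod z0).mp hz0B).2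
  have hVopen' : IsOpen (show Set (Weak (WithLp ∞ (X × Y))) from V) := hVopen
  have hopen : IsOpen[weakTop X] (ι ⁻¹' V) := hιc.isOpen_preimage _ hVopen'
  refine ⟨ι ⁻¹' V, hopen, ⟨z0.fst, ?_, ((mem_ball_prod z0).mp hz0B).1⟩, ?_⟩
  · show ι z0.fst ∈ V
    have : ι z0.fst = z0 := rfl
    rw [this]; exact hz0V
  · have hb : Bornology.IsBounded (V ∩ closedBall (0 : WithLp ∞ (X × Y)) 1) :=
      (isBounded_closedBall).subset Set.inter_subset_right
    have hle : diam (ι ⁻¹' V ∩ closedBall (0 : X) 1) ≤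
        diam (V ∩ closedBall (0 : WithLp ∞ (X × Y)) 1) := by
      apply diam_le_of_forall_dist_le diam_nonneg
      intro x hx x' hx'
      have h1 : ι x ∈ V ∩ closedBall 0 1 := ⟨hx.1, hιmem x hx.2⟩
      have h2 : ι x' ∈ V ∩ closedBall 0 1 := ⟨hx'.1, hιmem x' hx'.2⟩
      calc dist x x' = dist (ι x) (ι x') := by
            rw [WithLp.prod_dist_eq_sup]
            simp [hι, dist_nonneg]
        _ ≤ _ := dist_le_diam_of_mem hb h1 h2
    exact lt_of_le_of_lt hle hdiam

/-- Forward direction, second factor. -/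
lemma bhp_of_prod_right (h : BHP (WithLp ∞ (X × Y))) : BHP Y := by
  intro ε hε
  obtain ⟨V, hVopen, ⟨z0, hz0V, hz0B⟩, hdiam⟩ := h ε hε
  set ι : Y → WithLp ∞ (X × Y) := fun y => (WithLp.equiv ∞ (X × Y)).symm (z0.fst, y) with hι
  have hsum : ∀ a : Y, ι a = inrL a + inlL z0.fst := by
    intro a
    show ι a = (WithLp.prodContinuousLinearEquiv ∞ ℝ X Y).symm (0, a)
        + (WithLp.prodContinuousLinearEquiv ∞ ℝ X Y).symm (z0.fst, 0)
    rw [← map_add]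
    simp [hι, Prod.mk_add_mk]
  have hιc : Continuous (fun y : Weak Y => Weak.mk (ι y.out)) := by
    apply weakTop_cont_rng
    intro f
    have heq : (fun a : Weak Y => f ((Weak.mk (ι a.out)).out)) =
        fun a : Weak Y => (f.comp inrL) a.out + f (inlL z0.fst) := by
      funext a
      show f (ι a.out) = _
      rw [hsum a.out, map_add]
      rfl
    rw [heq]
    exact (weakTop_cont (f.comp inrL)).add continuous_const
  have hιmem : ∀ y : Y, y ∈ closedBall (0 : Y) 1 →
      ι y ∈ closedBall (0 : WithLp ∞ (X × Y)) 1 := by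
    intro y hy
    rw [mem_ball_prod]
    refine ⟨?_, ?_⟩
    · simpa [hι] using ((mem_ball_prod z0).mp hz0B).1
    · simpa [hι] using hy
  have hVopen' : IsOpen (show Set (Weak (WithLp ∞ (X × Y))) from V) := hVopen
  have hopen : IsOpen[weakTop Y] (ι ⁻¹' V) := hιc.isOpen_preimage _ hVopen'
  refine ⟨ι ⁻¹' V, hopen, ⟨z0.snd, ?_, ((mem_ball_prod z0).mp hz0B).2⟩, ?_⟩
  · show ι z0.snd ∈ V
    have : ι z0.snd = z0 := rfl
    rw [this]; exact hz0V
  · have hb : Bornology.IsBounded (V ∩ closedBall (0 : WithLp ∞ (X × Y)) 1) :=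
      (isBounded_closedBall).subset Set.inter_subset_right
    have hle : diam (ι ⁻¹' V ∩ closedBall (0 : Y) 1) ≤
        diam (V ∩ closedBall (0 : WithLp ∞ (X × Y)) 1) := by
      apply diam_le_of_forall_dist_le diam_nonneg
      intro y hy y' hy'
      have h1 : ι y ∈ V ∩ closedBall 0 1 := ⟨hy.1, hιmem y hy.2⟩
      have h2 : ι y' ∈ V ∩ closedBall 0 1 := ⟨hy'.1, hιmem y' hy'.2⟩
      calc dist y y' = dist (ι y) (ι y') := by
            rw [WithLp.prod_dist_eq_sup]
            simp [hι, dist_nonneg]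
        _ ≤ _ := dist_le_diam_of_mem hb h1 h2
    exact lt_of_le_of_lt hle hdiam

/-- Backward direction. -/
lemma bhp_prod (hX : BHP X) (hY : BHP Y) : BHP (WithLp ∞ (X × Y)) := by
  intro ε hε
  obtain ⟨VX, hVXopen, ⟨x0, hx0V, hx0B⟩, hdX⟩ := hX ε hε
  obtain ⟨VY, hVYopen, ⟨y0, hy0V, hy0B⟩, hdY⟩ := hY ε hε
  have hfstc : Continuous
      (fun z : Weak (WithLp ∞ (X × Y)) => Weak.mk (fstL (X := X) (Y := Y) z.out)) := by
    apply weakTop_cont_rng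
    intro g
    exact weakTop_cont (g.comp (fstL (X := X) (Y := Y)))
  have hsndc : Continuous
      (fun z : Weak (WithLp ∞ (X × Y)) => Weak.mk (sndL (X := X) (Y := Y) z.out)) := by
    apply weakTop_cont_rng
    intro g
    exact weakTop_cont (g.comp (sndL (X := X) (Y := Y)))
  have hVX' : IsOpen (show Set (Weak X) from VX) := hVXopen
  have hVY' : IsOpen (show Set (Weak Y) from VY) := hVYopen
  set V : Set (WithLp ∞ (X × Y)) :=
    (fun z : WithLp ∞ (X × Y) => fstL (X := X) (Y := Y) z) ⁻¹' VX ∩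
    (fun z : WithLp ∞ (X × Y) => sndL (X := X) (Y := Y) z) ⁻¹' VY with hV
  have hVopen : IsOpen[weakTop (WithLp ∞ (X × Y))] V :=
    (hfstc.isOpen_preimage _ hVX').inter (hsndc.isOpen_preimage _ hVY')
  have hmemV : ∀ z : WithLp ∞ (X × Y), z ∈ V ↔ z.fst ∈ VX ∧ z.snd ∈ VY := fun z => Iff.rfl
  set z0 : WithLp ∞ (X × Y) := (WithLp.equiv ∞ (X × Y)).symm (x0, y0) with hz0
  refine ⟨V, hVopen, ⟨z0, ?_, ?_⟩, ?_⟩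
  · exact (hmemV z0).mpr ⟨by simpa [hz0] using hx0V, by simpa [hz0] using hy0V⟩
  · rw [mem_ball_prod]
    exact ⟨by simpa [hz0] using hx0B, by simpa [hz0] using hy0B⟩
  · have hbX : Bornology.IsBounded (VX ∩ closedBall (0 : X) 1) :=
      (isBounded_closedBall).subset Set.inter_subset_right
    have hbY : Bornology.IsBounded (VY ∩ closedBall (0 : Y) 1) :=
      (isBounded_closedBall).subset Set.inter_subset_right
    have hle : diam (V ∩ closedBall (0 : WithLp ∞ (X × Y)) 1) ≤
        max (diam (VX ∩ closedBall (0 : X) 1)) (diam (VY ∩ closedBall (0 : Y) 1)) := by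
      apply diam_le_of_forall_dist_le (le_max_of_le_left diam_nonneg)
      intro z hz z' hz'
      rw [WithLp.prod_dist_eq_sup]
      apply max_le_max
      · exact dist_le_diam_of_mem hbX ⟨hz.1.1, ((mem_ball_prod z).mp hz.2).1⟩
          ⟨hz'.1.1, ((mem_ball_prod z').mp hz'.2).1⟩
      · exact dist_le_diam_of_mem hbY ⟨hz.1.2, ((mem_ball_prod z).mp hz.2).2⟩
          ⟨hz'.1.2, ((mem_ball_prod z').mp hz'.2).2⟩
    exact lt_of_le_of_lt hle (max_lt hdX hdY)

end Aux

/-- `Z = X ⊕_∞ Y` has `BHP` iff both `X` and `Y` have `BHP`. -/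
theorem statement8 (X Y : Type*) [NormedAddCommGroup X] [NormedSpace ℝ X] [CompleteSpace X]
    [NormedAddCommGroup Y] [NormedSpace ℝ Y] [CompleteSpace Y] :
    BHP (WithLp ∞ (X × Y)) ↔ BHP X ∧ BHP Y :=
  ⟨fun h => ⟨bhp_of_prod_left h, bhp_of_prod_right h⟩, fun ⟨hX, hY⟩ => bhp_prod hX hY⟩
end
end

section
/- Let X and Y be real Banach spaces, 1 ≤ p < ∞, and Z = X ⊕_p Y (the product X × Y with norm ‖(x,y)‖ = (‖x‖^p + ‖y‖^p)^{1/p}). If X has the Ball Small Combination of Slices Property (BSCSP) or Y has BSCSP, then Z has BSCSP. -/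
open Metric Topology Pointwise ENNReal

noncomputable section

section Aux9
set_option linter.unusedSectionVars false
variable {X Y : Type*} [NormedAddCommGroup X] [NormedSpace ℝ X]
  [NormedAddCommGroup Y] [NormedSpace ℝ Y] {p : ℝ≥0∞} [Fact (1 ≤ p)]

private lemma fst_le9 (hq : 0 < p.toReal) (z : WithLp p (X × Y)) : ‖z.fst‖ ≤ ‖z‖ := by
  rw [WithLp.prod_norm_eq_add hq]
  calc ‖z.fst‖ = (‖z.fst‖ ^ p.toReal) ^ (1/p.toReal) := by
        rw [one_div, Real.rpow_rpow_inv (norm_nonneg _) hq.ne']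
    _ ≤ _ := Real.rpow_le_rpow (by positivity)
        (le_add_of_nonneg_right (by positivity)) (by positivity)

private lemma snd_le9 (hq : 0 < p.toReal) (z : WithLp p (X × Y)) : ‖z.snd‖ ≤ ‖z‖ := by
  rw [WithLp.prod_norm_eq_add hq]
  calc ‖z.snd‖ = (‖z.snd‖ ^ p.toReal) ^ (1/p.toReal) := by
        rw [one_div, Real.rpow_rpow_inv (norm_nonneg _) hq.ne']
    _ ≤ _ := Real.rpow_le_rpow (by positivity)
        (le_add_of_nonneg_left (by positivity)) (by positivity)

private lemma norm_le_add9 (z : WithLp p (X × Y)) : ‖z‖ ≤ ‖z.fst‖ + ‖z.snd‖ := by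
  have hz : z = (WithLp.equiv p (X×Y)).symm (z.fst, 0) +
      (WithLp.equiv p (X×Y)).symm (0, z.snd) := by
    apply (WithLp.equiv p (X×Y)).injective
    simp [Prod.ext_iff]
  calc ‖z‖ = ‖(WithLp.equiv p (X×Y)).symm (z.fst, 0) +
      (WithLp.equiv p (X×Y)).symm (0, z.snd)‖ := by rw [← hz]
    _ ≤ ‖(WithLp.equiv p (X×Y)).symm (z.fst, (0:Y))‖ +
        ‖(WithLp.equiv p (X×Y)).symm ((0:X), z.snd)‖ := norm_add_le _ _
    _ = ‖z.fst‖ + ‖z.snd‖ := by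
        rw [WithLp.equiv_symm_apply, WithLp.norm_toLp_fst, WithLp.norm_toLp_snd]

private lemma bscsp_left9 (hp : p ≠ ∞) (hX : BSCSP X) : BSCSP (WithLp p (X × Y)) := by
  intro ε hε
  obtain ⟨n, f, α, lam, hf1, hα, hlam0, hlam1, hdiam⟩ := hX (ε/2) (by linarith)
  have hq : 0 < p.toReal :=
    ENNReal.toReal_pos (zero_lt_one.trans_le (Fact.out : (1:ℝ≥0∞) ≤ p)).ne' hp
  have hq1 : 1 ≤ p.toReal := by
    have h := ENNReal.toReal_mono hp (Fact.out : (1:ℝ≥0∞) ≤ p); simpa using h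
  set q := p.toReal with hqdef
  set s : ℝ := min (ε/8) 1 with hs_def
  have hs0 : 0 < s := lt_min (by linarith) one_pos
  have hs1 : s ≤ 1 := min_le_right _ _
  set δ0 : ℝ := s ^ q / q with hδ0_def
  have hδ0 : 0 < δ0 := div_pos (Real.rpow_pos_of_pos hs0 q) hq
  have hδ0_le1 : δ0 ≤ 1 := by
    rw [div_le_one hq]
    exact le_trans (Real.rpow_le_one hs0.le hs1 hq.le) hq1
  set α' : Fin n → ℝ := fun i => min (α i) δ0 with hα'_def
  have hα'δ0 : ∀ i, α' i ≤ δ0 := fun i => min_le_right _ _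
  have hα'1 : ∀ i, α' i ≤ 1 := fun i => le_trans (hα'δ0 i) hδ0_le1
  let Pfst : WithLp p (X × Y) →L[ℝ] X :=
    (ContinuousLinearMap.fst ℝ X Y).comp
      (WithLp.prodContinuousLinearEquiv p ℝ X Y).toContinuousLinearMap
  have hPfst : ∀ z : WithLp p (X × Y), Pfst z = z.fst := fun z => rfl
  let F : Fin n → (WithLp p (X × Y) →L[ℝ] ℝ) := fun i => (f i).comp Pfst
  have hFapp : ∀ i (z : WithLp p (X × Y)), F i z = f i z.fst := fun i z => rfl
  have hFnorm : ∀ i, ‖F i‖ = 1 := by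
    intro i
    apply le_antisymm
    · apply ContinuousLinearMap.opNorm_le_bound _ zero_le_one
      intro z
      rw [one_mul, hFapp]
      calc ‖f i z.fst‖ ≤ ‖f i‖ * ‖z.fst‖ := (f i).le_opNorm _
        _ = ‖z.fst‖ := by rw [hf1 i, one_mul]
        _ ≤ ‖z‖ := fst_le9 hq z
    · rw [← hf1 i]
      apply ContinuousLinearMap.opNorm_le_bound _ (norm_nonneg _)
      intro x
      have hx : f i x = F i ((WithLp.equiv p (X × Y)).symm (x, 0)) := rfl
      rw [hx]
      calc ‖F i ((WithLp.equiv p (X × Y)).symm (x, 0))‖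
          ≤ ‖F i‖ * ‖(WithLp.equiv p (X × Y)).symm (x, (0:Y))‖ := (F i).le_opNorm _
        _ = ‖F i‖ * ‖x‖ := by rw [WithLp.equiv_symm_apply, WithLp.norm_toLp_fst]
  -- key slice fact
  have hslice : ∀ i (z : WithLp p (X × Y)),
      z ∈ ballSlice (WithLp p (X × Y)) (F i) (α' i) →
      z.fst ∈ ballSlice X (f i) (α i) ∧ ‖z.snd‖ ≤ s := by
    intro i z hz
    obtain ⟨hz1, hz2⟩ := hz
    rw [mem_closedBall_zero_iff, WithLp.prod_norm_eq_add hq] at hz1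
    have hA : ‖z.fst‖ ^ q + ‖z.snd‖ ^ q ≤ 1 := by
      have h0 : (0:ℝ) ≤ ‖z.fst‖ ^ q + ‖z.snd‖ ^ q := by positivity
      calc ‖z.fst‖ ^ q + ‖z.snd‖ ^ q
          = ((‖z.fst‖ ^ q + ‖z.snd‖ ^ q) ^ (1/q)) ^ q := by
            rw [one_div, Real.rpow_inv_rpow h0 hq.ne']
        _ ≤ 1 ^ q := Real.rpow_le_rpow (by positivity) hz1 hq.le
        _ = 1 := Real.one_rpow _
    have hfa : 1 - α' i < f i z.fst := hz2
    have hfx_le : 1 - α' i ≤ ‖z.fst‖ := by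
      have h1 : f i z.fst ≤ ‖f i z.fst‖ := le_abs_self _
      have h2 : ‖f i z.fst‖ ≤ ‖f i‖ * ‖z.fst‖ := (f i).le_opNorm _
      rw [hf1 i, one_mul] at h2
      linarith
    have h1α : (0:ℝ) ≤ 1 - α' i := by linarith [hα'1 i]
    have hxq : (1 - α' i) ^ q ≤ ‖z.fst‖ ^ q := Real.rpow_le_rpow h1α hfx_le hq.le
    have hbern : 1 - q * α' i ≤ (1 - α' i) ^ q := by
      have hb := one_add_mul_self_le_rpow_one_add (s := -(α' i)) (by linarith) hq1
      have e1 : (1:ℝ) + -(α' i) = 1 - α' i := by ring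
      have e2 : (1:ℝ) + q * -(α' i) = 1 - q * α' i := by ring
      rw [e1, e2] at hb
      exact hb
    have hsqb : ‖z.snd‖ ^ q ≤ s ^ q := by
      have h2 : q * α' i ≤ s ^ q := by
        calc q * α' i ≤ q * (s ^ q / q) := by
              exact mul_le_mul_of_nonneg_left (hα'δ0 i) hq.le
          _ = s ^ q := by field_simp
      linarith
    have hsnd : ‖z.snd‖ ≤ s := by
      by_contra hcon
      push_neg at hcon
      have := Real.rpow_lt_rpow hs0.le hcon hq
      linarith
    have hfst1 : ‖z.fst‖ ≤ 1 := by
      by_contra hcon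
      push_neg at hcon
      have h1 : (1:ℝ) ^ q < ‖z.fst‖ ^ q := Real.rpow_lt_rpow zero_le_one hcon hq
      rw [Real.one_rpow] at h1
      have : (0:ℝ) ≤ ‖z.snd‖ ^ q := by positivity
      linarith
    refine ⟨⟨mem_closedBall_zero_iff.mpr hfst1, ?_⟩, hsnd⟩
    have : 1 - α i ≤ 1 - α' i := by
      have := min_le_left (α i) δ0
      simp only [hα'_def]
      linarith [min_le_left (α i) δ0]
    linarith
  -- the X-combination is bounded
  have hAsub : (∑ i, lam i • ballSlice X (f i) (α i)) ⊆ closedBall (0:X) 1 := by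
    intro x hx
    rw [Set.mem_fintype_sum] at hx
    obtain ⟨g, hg, rfl⟩ := hx
    rw [mem_closedBall_zero_iff]
    calc ‖∑ i, g i‖ ≤ ∑ i, ‖g i‖ := norm_sum_le _ _
      _ ≤ ∑ i, lam i := by
          apply Finset.sum_le_sum
          intro i _
          obtain ⟨w, hw, hwe⟩ := Set.mem_smul_set.mp (hg i)
          rw [← hwe, norm_smul, Real.norm_eq_abs, abs_of_nonneg (hlam0 i)]
          have hw1 : ‖w‖ ≤ 1 := mem_closedBall_zero_iff.mp hw.1
          nlinarith [hlam0 i]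
      _ = 1 := hlam1
  refine ⟨n, F, α', lam, hFnorm, fun i => lt_min (hα i) hδ0, hlam0, hlam1, ?_⟩
  have key : diam (∑ i, lam i • ballSlice (WithLp p (X × Y)) (F i) (α' i)) ≤
      diam (∑ i, lam i • ballSlice X (f i) (α i)) + 2 * s := by
    apply diam_le_of_forall_dist_le (by positivity)
    intro u hu v hv
    rw [Set.mem_fintype_sum] at hu hv
    obtain ⟨gu, hgu, rfl⟩ := hu
    obtain ⟨gv, hgv, rfl⟩ := hv
    choose wu hwu hgu_eq using fun i => Set.mem_smul_set.mp (hgu i)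
    choose wv hwv hgv_eq using fun i => Set.mem_smul_set.mp (hgv i)
    have hfstu : (∑ i, gu i).fst = ∑ i, lam i • (wu i).fst := by
      have h1 : (∑ i, gu i).fst = ∑ i, (gu i).fst := by
        simp [← hPfst, map_sum]
      rw [h1]
      exact Finset.sum_congr rfl fun i _ => by rw [← hgu_eq i]; rfl
    have hfstv : (∑ i, gv i).fst = ∑ i, lam i • (wv i).fst := by
      have h1 : (∑ i, gv i).fst = ∑ i, (gv i).fst := by
        simp [← hPfst, map_sum]
      rw [h1]
      exact Finset.sum_congr rfl fun i _ => by rw [← hgv_eq i]; rfl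
    have hsndu : ‖(∑ i, gu i).snd‖ ≤ s := by
      have h1 : (∑ i, gu i).snd = ∑ i, lam i • (wu i).snd := by
        have h2 : (∑ i, gu i).snd = ∑ i, (gu i).snd := by
          let Psnd : WithLp p (X × Y) →L[ℝ] Y :=
            (ContinuousLinearMap.snd ℝ X Y).comp
              (WithLp.prodContinuousLinearEquiv p ℝ X Y).toContinuousLinearMap
          have hPsnd : ∀ z : WithLp p (X × Y), Psnd z = z.snd := fun z => rfl
          simp [← hPsnd, map_sum]
        rw [h2]
        exact Finset.sum_congr rfl fun i _ => by rw [← hgu_eq i]; rfl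
      rw [h1]
      calc ‖∑ i, lam i • (wu i).snd‖ ≤ ∑ i, ‖lam i • (wu i).snd‖ := norm_sum_le _ _
        _ ≤ ∑ i, lam i * s := by
            apply Finset.sum_le_sum
            intro i _
            rw [norm_smul, Real.norm_eq_abs, abs_of_nonneg (hlam0 i)]
            exact mul_le_mul_of_nonneg_left ((hslice i _ (hwu i)).2) (hlam0 i)
        _ = s := by rw [← Finset.sum_mul, hlam1, one_mul]
    have hsndv : ‖(∑ i, gv i).snd‖ ≤ s := by
      have h1 : (∑ i, gv i).snd = ∑ i, lam i • (wv i).snd := by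
        have h2 : (∑ i, gv i).snd = ∑ i, (gv i).snd := by
          let Psnd : WithLp p (X × Y) →L[ℝ] Y :=
            (ContinuousLinearMap.snd ℝ X Y).comp
              (WithLp.prodContinuousLinearEquiv p ℝ X Y).toContinuousLinearMap
          have hPsnd : ∀ z : WithLp p (X × Y), Psnd z = z.snd := fun z => rfl
          simp [← hPsnd, map_sum]
        rw [h2]
        exact Finset.sum_congr rfl fun i _ => by rw [← hgv_eq i]; rfl
      rw [h1]
      calc ‖∑ i, lam i • (wv i).snd‖ ≤ ∑ i, ‖lam i • (wv i).snd‖ := norm_sum_le _ _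
        _ ≤ ∑ i, lam i * s := by
            apply Finset.sum_le_sum
            intro i _
            rw [norm_smul, Real.norm_eq_abs, abs_of_nonneg (hlam0 i)]
            exact mul_le_mul_of_nonneg_left ((hslice i _ (hwv i)).2) (hlam0 i)
        _ = s := by rw [← Finset.sum_mul, hlam1, one_mul]
    have huA : (∑ i, gu i).fst ∈ ∑ i, lam i • ballSlice X (f i) (α i) := by
      rw [hfstu]
      exact Set.finset_sum_mem_finset_sum _ _ _
        (fun i _ => Set.smul_mem_smul_set (hslice i _ (hwu i)).1)
    have hvA : (∑ i, gv i).fst ∈ ∑ i, lam i • ballSlice X (f i) (α i) := by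
      rw [hfstv]
      exact Set.finset_sum_mem_finset_sum _ _ _
        (fun i _ => Set.smul_mem_smul_set (hslice i _ (hwv i)).1)
    have hfd : ‖(∑ i, gu i).fst - (∑ i, gv i).fst‖ ≤
        diam (∑ i, lam i • ballSlice X (f i) (α i)) := by
      rw [← dist_eq_norm]
      exact dist_le_diam_of_mem (Metric.isBounded_closedBall.subset hAsub) huA hvA
    rw [dist_eq_norm]
    calc ‖(∑ i, gu i) - (∑ i, gv i)‖
        ≤ ‖((∑ i, gu i) - (∑ i, gv i)).fst‖ + ‖((∑ i, gu i) - (∑ i, gv i)).snd‖ :=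
          norm_le_add9 _
      _ = ‖(∑ i, gu i).fst - (∑ i, gv i).fst‖ + ‖(∑ i, gu i).snd - (∑ i, gv i).snd‖ := rfl
      _ ≤ diam (∑ i, lam i • ballSlice X (f i) (α i)) + (‖(∑ i, gu i).snd‖ + ‖(∑ i, gv i).snd‖) := by
          have := norm_sub_le (∑ i, gu i).snd (∑ i, gv i).snd
          linarith
      _ ≤ diam (∑ i, lam i • ballSlice X (f i) (α i)) + 2 * s := by linarith
  have hsε : s ≤ ε/8 := min_le_left _ _
  calc diam (∑ i, lam i • ballSlice (WithLp p (X × Y)) (F i) (α' i))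
      ≤ diam (∑ i, lam i • ballSlice X (f i) (α i)) + 2 * s := key
    _ < ε := by linarith

private lemma bscsp_right9 (hp : p ≠ ∞) (hY : BSCSP Y) : BSCSP (WithLp p (X × Y)) := by
  intro ε hε
  obtain ⟨n, f, α, lam, hf1, hα, hlam0, hlam1, hdiam⟩ := hY (ε/2) (by linarith)
  have hq : 0 < p.toReal :=
    ENNReal.toReal_pos (zero_lt_one.trans_le (Fact.out : (1:ℝ≥0∞) ≤ p)).ne' hp
  have hq1 : 1 ≤ p.toReal := by
    have h := ENNReal.toReal_mono hp (Fact.out : (1:ℝ≥0∞) ≤ p); simpa using h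
  set q := p.toReal with hqdef
  set s : ℝ := min (ε/8) 1 with hs_def
  have hs0 : 0 < s := lt_min (by linarith) one_pos
  have hs1 : s ≤ 1 := min_le_right _ _
  set δ0 : ℝ := s ^ q / q with hδ0_def
  have hδ0 : 0 < δ0 := div_pos (Real.rpow_pos_of_pos hs0 q) hq
  have hδ0_le1 : δ0 ≤ 1 := by
    rw [div_le_one hq]
    exact le_trans (Real.rpow_le_one hs0.le hs1 hq.le) hq1
  set α' : Fin n → ℝ := fun i => min (α i) δ0 with hα'_def
  have hα'δ0 : ∀ i, α' i ≤ δ0 := fun i => min_le_right _ _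
  have hα'1 : ∀ i, α' i ≤ 1 := fun i => le_trans (hα'δ0 i) hδ0_le1
  let Psnd : WithLp p (X × Y) →L[ℝ] Y :=
    (ContinuousLinearMap.snd ℝ X Y).comp
      (WithLp.prodContinuousLinearEquiv p ℝ X Y).toContinuousLinearMap
  have hPfst : ∀ z : WithLp p (X × Y), Psnd z = z.snd := fun z => rfl
  let F : Fin n → (WithLp p (X × Y) →L[ℝ] ℝ) := fun i => (f i).comp Psnd
  have hFapp : ∀ i (z : WithLp p (X × Y)), F i z = f i z.snd := fun i z => rfl
  have hFnorm : ∀ i, ‖F i‖ = 1 := by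
    intro i
    apply le_antisymm
    · apply ContinuousLinearMap.opNorm_le_bound _ zero_le_one
      intro z
      rw [one_mul, hFapp]
      calc ‖f i z.snd‖ ≤ ‖f i‖ * ‖z.snd‖ := (f i).le_opNorm _
        _ = ‖z.snd‖ := by rw [hf1 i, one_mul]
        _ ≤ ‖z‖ := snd_le9 hq z
    · rw [← hf1 i]
      apply ContinuousLinearMap.opNorm_le_bound _ (norm_nonneg _)
      intro x
      have hx : f i x = F i ((WithLp.equiv p (X × Y)).symm (0, x)) := rfl
      rw [hx]
      calc ‖F i ((WithLp.equiv p (X × Y)).symm (0, x))‖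
          ≤ ‖F i‖ * ‖(WithLp.equiv p (X × Y)).symm ((0:X), x)‖ := (F i).le_opNorm _
        _ = ‖F i‖ * ‖x‖ := by rw [WithLp.equiv_symm_apply, WithLp.norm_toLp_snd]
  -- key slice fact
  have hslice : ∀ i (z : WithLp p (X × Y)),
      z ∈ ballSlice (WithLp p (X × Y)) (F i) (α' i) →
      z.snd ∈ ballSlice Y (f i) (α i) ∧ ‖z.fst‖ ≤ s := by
    intro i z hz
    obtain ⟨hz1, hz2⟩ := hz
    rw [mem_closedBall_zero_iff, WithLp.prod_norm_eq_add hq] at hz1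
    have hA : ‖z.fst‖ ^ q + ‖z.snd‖ ^ q ≤ 1 := by
      have h0 : (0:ℝ) ≤ ‖z.fst‖ ^ q + ‖z.snd‖ ^ q := by positivity
      calc ‖z.fst‖ ^ q + ‖z.snd‖ ^ q
          = ((‖z.fst‖ ^ q + ‖z.snd‖ ^ q) ^ (1/q)) ^ q := by
            rw [one_div, Real.rpow_inv_rpow h0 hq.ne']
        _ ≤ 1 ^ q := Real.rpow_le_rpow (by positivity) hz1 hq.le
        _ = 1 := Real.one_rpow _
    have hfa : 1 - α' i < f i z.snd := hz2
    have hfx_le : 1 - α' i ≤ ‖z.snd‖ := by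
      have h1 : f i z.snd ≤ ‖f i z.snd‖ := le_abs_self _
      have h2 : ‖f i z.snd‖ ≤ ‖f i‖ * ‖z.snd‖ := (f i).le_opNorm _
      rw [hf1 i, one_mul] at h2
      linarith
    have h1α : (0:ℝ) ≤ 1 - α' i := by linarith [hα'1 i]
    have hxq : (1 - α' i) ^ q ≤ ‖z.snd‖ ^ q := Real.rpow_le_rpow h1α hfx_le hq.le
    have hbern : 1 - q * α' i ≤ (1 - α' i) ^ q := by
      have hb := one_add_mul_self_le_rpow_one_add (s := -(α' i)) (by linarith) hq1
      have e1 : (1:ℝ) + -(α' i) = 1 - α' i := by ring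
      have e2 : (1:ℝ) + q * -(α' i) = 1 - q * α' i := by ring
      rw [e1, e2] at hb
      exact hb
    have hsqb : ‖z.fst‖ ^ q ≤ s ^ q := by
      have h2 : q * α' i ≤ s ^ q := by
        calc q * α' i ≤ q * (s ^ q / q) := by
              exact mul_le_mul_of_nonneg_left (hα'δ0 i) hq.le
          _ = s ^ q := by field_simp
      linarith
    have hsnd : ‖z.fst‖ ≤ s := by
      by_contra hcon
      push_neg at hcon
      have := Real.rpow_lt_rpow hs0.le hcon hq
      linarith
    have hfst1 : ‖z.snd‖ ≤ 1 := by
      by_contra hcon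
      push_neg at hcon
      have h1 : (1:ℝ) ^ q < ‖z.snd‖ ^ q := Real.rpow_lt_rpow zero_le_one hcon hq
      rw [Real.one_rpow] at h1
      have : (0:ℝ) ≤ ‖z.fst‖ ^ q := by positivity
      linarith
    refine ⟨⟨mem_closedBall_zero_iff.mpr hfst1, ?_⟩, hsnd⟩
    have : 1 - α i ≤ 1 - α' i := by
      have := min_le_left (α i) δ0
      simp only [hα'_def]
      linarith [min_le_left (α i) δ0]
    linarith
  -- the X-combination is bounded
  have hAsub : (∑ i, lam i • ballSlice Y (f i) (α i)) ⊆ closedBall (0:Y) 1 := by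
    intro x hx
    rw [Set.mem_fintype_sum] at hx
    obtain ⟨g, hg, rfl⟩ := hx
    rw [mem_closedBall_zero_iff]
    calc ‖∑ i, g i‖ ≤ ∑ i, ‖g i‖ := norm_sum_le _ _
      _ ≤ ∑ i, lam i := by
          apply Finset.sum_le_sum
          intro i _
          obtain ⟨w, hw, hwe⟩ := Set.mem_smul_set.mp (hg i)
          rw [← hwe, norm_smul, Real.norm_eq_abs, abs_of_nonneg (hlam0 i)]
          have hw1 : ‖w‖ ≤ 1 := mem_closedBall_zero_iff.mp hw.1
          nlinarith [hlam0 i]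
      _ = 1 := hlam1
  refine ⟨n, F, α', lam, hFnorm, fun i => lt_min (hα i) hδ0, hlam0, hlam1, ?_⟩
  have key : diam (∑ i, lam i • ballSlice (WithLp p (X × Y)) (F i) (α' i)) ≤
      diam (∑ i, lam i • ballSlice Y (f i) (α i)) + 2 * s := by
    apply diam_le_of_forall_dist_le (by positivity)
    intro u hu v hv
    rw [Set.mem_fintype_sum] at hu hv
    obtain ⟨gu, hgu, rfl⟩ := hu
    obtain ⟨gv, hgv, rfl⟩ := hv
    choose wu hwu hgu_eq using fun i => Set.mem_smul_set.mp (hgu i)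
    choose wv hwv hgv_eq using fun i => Set.mem_smul_set.mp (hgv i)
    have hsndu : (∑ i, gu i).snd = ∑ i, lam i • (wu i).snd := by
      have h1 : (∑ i, gu i).snd = ∑ i, (gu i).snd := by
        simp [← hPfst, map_sum]
      rw [h1]
      exact Finset.sum_congr rfl fun i _ => by rw [← hgu_eq i]; rfl
    have hsndv : (∑ i, gv i).snd = ∑ i, lam i • (wv i).snd := by
      have h1 : (∑ i, gv i).snd = ∑ i, (gv i).snd := by
        simp [← hPfst, map_sum]
      rw [h1]
      exact Finset.sum_congr rfl fun i _ => by rw [← hgv_eq i]; rfl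
    have hfstu : ‖(∑ i, gu i).fst‖ ≤ s := by
      have h1 : (∑ i, gu i).fst = ∑ i, lam i • (wu i).fst := by
        have h2 : (∑ i, gu i).fst = ∑ i, (gu i).fst := by
          let Pfst : WithLp p (X × Y) →L[ℝ] X :=
            (ContinuousLinearMap.fst ℝ X Y).comp
              (WithLp.prodContinuousLinearEquiv p ℝ X Y).toContinuousLinearMap
          have hPsnd : ∀ z : WithLp p (X × Y), Pfst z = z.fst := fun z => rfl
          simp [← hPsnd, map_sum]
        rw [h2]
        exact Finset.sum_congr rfl fun i _ => by rw [← hgu_eq i]; rfl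
      rw [h1]
      calc ‖∑ i, lam i • (wu i).fst‖ ≤ ∑ i, ‖lam i • (wu i).fst‖ := norm_sum_le _ _
        _ ≤ ∑ i, lam i * s := by
            apply Finset.sum_le_sum
            intro i _
            rw [norm_smul, Real.norm_eq_abs, abs_of_nonneg (hlam0 i)]
            exact mul_le_mul_of_nonneg_left ((hslice i _ (hwu i)).2) (hlam0 i)
        _ = s := by rw [← Finset.sum_mul, hlam1, one_mul]
    have hfstv : ‖(∑ i, gv i).fst‖ ≤ s := by
      have h1 : (∑ i, gv i).fst = ∑ i, lam i • (wv i).fst := by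
        have h2 : (∑ i, gv i).fst = ∑ i, (gv i).fst := by
          let Pfst : WithLp p (X × Y) →L[ℝ] X :=
            (ContinuousLinearMap.fst ℝ X Y).comp
              (WithLp.prodContinuousLinearEquiv p ℝ X Y).toContinuousLinearMap
          have hPsnd : ∀ z : WithLp p (X × Y), Pfst z = z.fst := fun z => rfl
          simp [← hPsnd, map_sum]
        rw [h2]
        exact Finset.sum_congr rfl fun i _ => by rw [← hgv_eq i]; rfl
      rw [h1]
      calc ‖∑ i, lam i • (wv i).fst‖ ≤ ∑ i, ‖lam i • (wv i).fst‖ := norm_sum_le _ _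
        _ ≤ ∑ i, lam i * s := by
            apply Finset.sum_le_sum
            intro i _
            rw [norm_smul, Real.norm_eq_abs, abs_of_nonneg (hlam0 i)]
            exact mul_le_mul_of_nonneg_left ((hslice i _ (hwv i)).2) (hlam0 i)
        _ = s := by rw [← Finset.sum_mul, hlam1, one_mul]
    have huA : (∑ i, gu i).snd ∈ ∑ i, lam i • ballSlice Y (f i) (α i) := by
      rw [hsndu]
      exact Set.finset_sum_mem_finset_sum _ _ _
        (fun i _ => Set.smul_mem_smul_set (hslice i _ (hwu i)).1)
    have hvA : (∑ i, gv i).snd ∈ ∑ i, lam i • ballSlice Y (f i) (α i) := by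
      rw [hsndv]
      exact Set.finset_sum_mem_finset_sum _ _ _
        (fun i _ => Set.smul_mem_smul_set (hslice i _ (hwv i)).1)
    have hfd : ‖(∑ i, gu i).snd - (∑ i, gv i).snd‖ ≤
        diam (∑ i, lam i • ballSlice Y (f i) (α i)) := by
      rw [← dist_eq_norm]
      exact dist_le_diam_of_mem (Metric.isBounded_closedBall.subset hAsub) huA hvA
    rw [dist_eq_norm]
    calc ‖(∑ i, gu i) - (∑ i, gv i)‖
        ≤ ‖((∑ i, gu i) - (∑ i, gv i)).fst‖ + ‖((∑ i, gu i) - (∑ i, gv i)).snd‖ :=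
          norm_le_add9 _
      _ = ‖(∑ i, gu i).fst - (∑ i, gv i).fst‖ + ‖(∑ i, gu i).snd - (∑ i, gv i).snd‖ := rfl
      _ ≤ diam (∑ i, lam i • ballSlice Y (f i) (α i)) + (‖(∑ i, gu i).fst‖ + ‖(∑ i, gv i).fst‖) := by
          have := norm_sub_le (∑ i, gu i).fst (∑ i, gv i).fst
          linarith
      _ ≤ diam (∑ i, lam i • ballSlice Y (f i) (α i)) + 2 * s := by linarith
  have hsε : s ≤ ε/8 := min_le_left _ _
  calc diam (∑ i, lam i • ballSlice (WithLp p (X × Y)) (F i) (α' i))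
      ≤ diam (∑ i, lam i • ballSlice Y (f i) (α i)) + 2 * s := key
    _ < ε := by linarith


end Aux9

/-- For `Z = X ⊕_p Y` (`1 ≤ p < ∞`), if `X` or `Y` has `BSCSP` then `Z` has `BSCSP`. -/
theorem statement9 (X Y : Type*) [NormedAddCommGroup X] [NormedSpace ℝ X] [CompleteSpace X]
    [NormedAddCommGroup Y] [NormedSpace ℝ Y] [CompleteSpace Y]
    (p : ℝ≥0∞) [Fact (1 ≤ p)] (hp : p ≠ ∞) (h : BSCSP X ∨ BSCSP Y) :
    BSCSP (WithLp p (X × Y)) := by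
  rcases h with hX | hY
  · exact bscsp_left9 hp hX
  · exact bscsp_right9 hp hY
end
end
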